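/- Let ū ∈ W̃^𝒞 be an admissible tuple and let ψ ∈ Ψ. Then there exists m ∈ ℕ such that for every m-regular admissible tuple w̄ ∈ W̃^𝒞 and every μ ∈ Λ satisfying μu_C ≤_{C^ψ} w_C for every chamber C with ψ ∈ Ψ_C, one has μu_C ≤_C w_C for every chamber C ∈ 𝒞. -/

import Mathlib

open scoped Classical

noncomputable section

/-- A (reduced, crystallographic) root system `Φ` in the dual of a real vector space `V`,
together with a chosen coroot `α̌ ∈ V` for every root `α`. -/
structure RootSystemData (V : Type*) [AddCommGroup V] [Module ℝ V] where
  roots : Set (Module.Dual ℝ V)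
  coroot : Module.Dual ℝ V → V
  finite : roots.Finite
  ne_zero : ∀ α ∈ roots, α ≠ 0
  root_coroot_two : ∀ α ∈ roots, α (coroot α) = 2
  reflect_mem : ∀ α ∈ roots, ∀ β ∈ roots, β - β (coroot α) • α ∈ roots
  crystallographic : ∀ α ∈ roots, ∀ β ∈ roots, ∃ n : ℤ, β (coroot α) = (n : ℝ)
  reduced : ∀ α ∈ roots, ∀ c : ℝ, c • α ∈ roots → c = 1 ∨ c = -1
  span_top : Submodule.span ℝ roots = ⊤

section
variable {V : Type*} [AddCommGroup V] [Module ℝ V]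

/-- The simple elements of a positive system `P`: elements which are not sums of two
elements of `P`. -/
def simplesOf (P : Set (Module.Dual ℝ V)) : Set (Module.Dual ℝ V) :=
  {α | α ∈ P ∧ ¬∃ β ∈ P, ∃ γ ∈ P, α = β + γ}

/-- The affine root `(α, n)` viewed as the affine function `x ↦ α(x) + n`. -/
def aev (α : Module.Dual ℝ V) (n : ℤ) : V → ℝ := fun x => α x + (n : ℝ)

/-- `π : W̃ → Λ`, `w ↦ w(0)`. -/
def piL (w : Equiv.Perm V) : V := w 0

/-- Translation by `μ`, as an element of the group of permutations of `V`. -/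
def transl (μ : V) : Equiv.Perm V := Equiv.addLeft μ

end

namespace RootSystemData

variable {V : Type*} [AddCommGroup V] [Module ℝ V]

variable (RS : RootSystemData V)

/-- A point is regular if it lies on no root hyperplane. -/
def IsRegularPt (x : V) : Prop := ∀ α ∈ RS.roots, α x ≠ 0

/-- Weyl chambers of `Φ`: connected components of the set of regular points,
described by the strict sign pattern of a regular point. -/
def IsChamber (C : Set V) : Prop :=
  ∃ v, RS.IsRegularPt v ∧ C = {x | ∀ α ∈ RS.roots, 0 < α v → 0 < α x}

/-- The type `𝒞` of Weyl chambers. -/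
abbrev ChamberT := {C : Set V // RS.IsChamber C}

/-- The set `Φ_C` of `C`-positive roots. -/
def pos (C : Set V) : Set (Module.Dual ℝ V) := {α | α ∈ RS.roots ∧ ∀ x ∈ C, 0 < α x}


/-- The set `Δ_C` of `C`-simple roots. -/
def simples (C : Set V) : Set (Module.Dual ℝ V) := simplesOf (RS.pos C)

/-- The affine reflection `s_{(α,n)} : x ↦ x − (α(x)+n) • α̌`. -/
def sAff (α : Module.Dual ℝ V) (n : ℤ) : Equiv.Perm V :=
  if h : α (RS.coroot α) = 2 then
    Function.Involutive.toPerm (fun x => x - (α x + (n : ℝ)) • RS.coroot α) (by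
      intro x
      simp only [map_sub, map_smul, smul_eq_mul, h]
      match_scalars <;> ring)
  else Equiv.refl V


/-- Positivity of an affine function `f` (which is required to be an affine root
`(α,n)`), relative to a positive system `P ⊂ Φ`:  `n > 0`, or `n = 0 ∧ α ∈ P`. -/
def IsPosAff (P : Set (Module.Dual ℝ V)) (f : V → ℝ) : Prop :=
  ∃ α ∈ RS.roots, ∃ n : ℤ, f = aev α n ∧ (0 < n ∨ (n = 0 ∧ α ∈ P))

/-- The subgroup of the affine Weyl group generated by the reflections `s_{(α,n)}`
with `α ∈ Φ ∩ Φ'`. -/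
def affWeylOf (Φ' : Set (Module.Dual ℝ V)) : Subgroup (Equiv.Perm V) :=
  Subgroup.closure {g | ∃ α ∈ RS.roots ∩ Φ', ∃ n : ℤ, g = RS.sAff α n}

/-- The affine Weyl group `W̃ = W ⋉ Λ`, realized as the group generated by all affine
reflections `s_{(α,n)}`. -/
def affWeyl : Subgroup (Equiv.Perm V) := RS.affWeylOf Set.univ

/-- The finite Weyl group `W`, generated by the linear reflections `s_α = s_{(α,0)}`. -/
def weyl : Subgroup (Equiv.Perm V) :=
  Subgroup.closure {g | ∃ α ∈ RS.roots, g = RS.sAff α 0}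

/-- The subgroup `W̃_α` generated by the reflections `s_{(α,n)}`, `n ∈ ℤ`. -/
def reflSubgroup (α : Module.Dual ℝ V) : Subgroup (Equiv.Perm V) :=
  Subgroup.closure {g | ∃ n : ℤ, g = RS.sAff α n}


/-- The coroot lattice `Λ ⊂ V`. -/
def corootLattice : AddSubgroup V := AddSubgroup.closure (RS.coroot '' RS.roots)


/-- The (open) fundamental alcove `A₀ ⊂ C₀`, whose closure contains `0`. -/
def alcove (C₀ : Set V) : Set V := {x | ∀ α ∈ RS.pos C₀, 0 < α x ∧ α x < 1}

/-- `w ∈ C`, i.e. `w(A₀) ⊂ C`. -/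
def MemC (C₀ : Set V) (w : Equiv.Perm V) (C : Set V) : Prop :=
  ∀ x ∈ RS.alcove C₀, w x ∈ C

/-- The inversion set of `w`: positive affine roots `f` with `w⁻¹(f) = f ∘ w`
negative. -/
def invSet (P : Set (Module.Dual ℝ V)) (w : Equiv.Perm V) : Set (V → ℝ) :=
  {f | RS.IsPosAff P f ∧ ¬ RS.IsPosAff P (fun x => f (w x))}

/-- The length function `l` on `W̃` determined by the fundamental alcove:
the number of inversions. -/
def len (C₀ : Set V) (w : Equiv.Perm V) : ℕ := (RS.invSet (RS.pos C₀) w).ncard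

/-- The (strict) Bruhat order on `W̃`: the transitive closure of
`x < s_{(α,n)} x` whenever the length increases. -/
def bruhatLT (C₀ : Set V) : Equiv.Perm V → Equiv.Perm V → Prop :=
  Relation.TransGen (fun x y =>
    (∃ α ∈ RS.roots, ∃ n : ℤ, y = RS.sAff α n * x) ∧ RS.len C₀ x < RS.len C₀ y)

/-- The Bruhat order `≤` on `W̃`. -/
def bruhatLE (C₀ : Set V) (x y : Equiv.Perm V) : Prop := x = y ∨ RS.bruhatLT C₀ x y

/-- One step of the ordering `<_{Φ'}`:  `x = s_{(α,n)} y <_{(α,n)} y` with `α ∈ Φ'`,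
i.e. `y⁻¹((α,n)) > 0` (positivity of affine roots relative to `P`). -/
def stepRel (P Φ' : Set (Module.Dual ℝ V)) (x y : Equiv.Perm V) : Prop :=
  ∃ α ∈ RS.roots ∩ Φ', ∃ n : ℤ,
    x = RS.sAff α n * y ∧ RS.IsPosAff P (fun v => aev α n (y v))

/-- The ordering `<_{Φ'}` on `W̃` (with affine-root positivity relative to `P`). -/
def ordLT (P Φ' : Set (Module.Dual ℝ V)) : Equiv.Perm V → Equiv.Perm V → Prop :=
  Relation.TransGen (RS.stepRel P Φ')

/-- The ordering `≤_{Φ'}` on `W̃`. -/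
def ordLE (P Φ' : Set (Module.Dual ℝ V)) (x y : Equiv.Perm V) : Prop :=
  x = y ∨ RS.ordLT P Φ' x y

/-- The ordering `<_{Φ'}` on `V`: `x <_{Φ'} y` iff `y − x` is a positive linear
combination of coroots `α̌` with `α ∈ Φ'`. -/
def vecLT (Φ' : Set (Module.Dual ℝ V)) (x y : V) : Prop :=
  ∃ s : Finset (Module.Dual ℝ V), ∃ c : Module.Dual ℝ V → ℝ,
    s.Nonempty ∧ (∀ α ∈ s, α ∈ RS.roots ∩ Φ' ∧ 0 < c α) ∧
      y - x = ∑ α ∈ s, c α • RS.coroot α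

/-- The ordering `≤_{Φ'}` on `V`. -/
def vecLE (Φ' : Set (Module.Dual ℝ V)) (x y : V) : Prop := x = y ∨ RS.vecLT Φ' x y

/-- `ψ` is the fundamental weight of the chamber `C` corresponding to the simple root
`α ∈ Δ_C`:  `⟨ψ, β̌⟩ = δ_{αβ}` for `β ∈ Δ_C`. -/
def PairsIn (C : Set V) (ψ α : Module.Dual ℝ V) : Prop :=
  α ∈ RS.simples C ∧ ∀ β ∈ RS.simples C, ψ (RS.coroot β) = if β = α then 1 else 0

/-- `ψv` is the fundamental coweight of the chamber `C` corresponding to the simple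
root `α ∈ Δ_C`:  `⟨β, ψv⟩ = δ_{αβ}` for `β ∈ Δ_C`. -/
def CoPairsIn (C : Set V) (α : Module.Dual ℝ V) (ψv : V) : Prop :=
  α ∈ RS.simples C ∧ ∀ β ∈ RS.simples C, β ψv = if β = α then 1 else 0

/-- `ψ ∈ Ψ_C` with corresponding fundamental coweight `ψ̌ = ψv`. -/
def IsFundPair (C : Set V) (ψ : Module.Dual ℝ V) (ψv : V) : Prop :=
  ∃ α, RS.PairsIn C ψ α ∧ RS.CoPairsIn C α ψv

/-- `ψ ∈ Ψ_C`. -/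
def IsFundWeightOf (C : Set V) (ψ : Module.Dual ℝ V) : Prop := ∃ α, RS.PairsIn C ψ α

/-- `Φ(ψ) = {α ∈ Φ : ⟨α, ψ̌⟩ ≥ 0}` (described via the coweight `ψv = ψ̌`). -/
def phiNonneg (ψv : V) : Set (Module.Dual ℝ V) := {α | α ∈ RS.roots ∧ 0 ≤ α ψv}

/-- `Φ^ψ = {α ∈ Φ : ⟨α, ψ̌⟩ = 0}` (described via the coweight `ψv = ψ̌`). -/
def phiZero (ψv : V) : Set (Module.Dual ℝ V) := {α | α ∈ RS.roots ∧ α ψv = 0}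

/-- The set `W̃_ψ` of `w ∈ W̃` with `w⁻¹(Φ̃^ψ_{>0}) ⊂ Φ̃_{>0}`; here `Φψ = Φ^ψ`,
`P` is the chosen positive system of `Φ^ψ` and `C₀` determines `Φ̃_{>0}`. -/
def WpsiSet (C₀ : Set V) (Φψ P : Set (Module.Dual ℝ V)) : Set (Equiv.Perm V) :=
  {w | ∀ α ∈ RS.roots ∩ Φψ, ∀ n : ℤ, (0 < n ∨ (n = 0 ∧ α ∈ P)) →
      RS.IsPosAff (RS.pos C₀) (fun v => aev α n (w v))}

/-- Admissibility of a tuple `w̄ ∈ W̃^𝒞`: `w_{s_α(C)} ≤_α w_C` for all `C ∈ 𝒞`,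
`α ∈ Δ_C`. -/
def AdmissibleW (C₀ : Set V) (w : RS.ChamberT → Equiv.Perm V) : Prop :=
  ∀ C : RS.ChamberT, ∀ α ∈ RS.simples C.1, ∀ C' : RS.ChamberT,
    C'.1 = ⇑(RS.sAff α 0) '' C.1 → RS.ordLE (RS.pos C₀) {α} (w C') (w C)

/-- Quasi-admissibility of a tuple `w̄ ∈ W̃^𝒞`: `w_{s_α(C)} ∈ W̃_α w_C`. -/
def QuasiAdmissibleW (w : RS.ChamberT → Equiv.Perm V) : Prop :=
  ∀ C : RS.ChamberT, ∀ α ∈ RS.simples C.1, ∀ C' : RS.ChamberT,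
    C'.1 = ⇑(RS.sAff α 0) '' C.1 → ∃ u ∈ RS.reflSubgroup α, w C' = u * w C

/-- Admissibility of a tuple `μ̄ ∈ V^𝒞`: `μ_C − μ_{s_α(C)} ∈ ℝ_{≥0} α̌`. -/
def AdmissibleV (μ : RS.ChamberT → V) : Prop :=
  ∀ C : RS.ChamberT, ∀ α ∈ RS.simples C.1, ∀ C' : RS.ChamberT,
    C'.1 = ⇑(RS.sAff α 0) '' C.1 → ∃ c : ℝ, 0 ≤ c ∧ μ C - μ C' = c • RS.coroot α

/-- Quasi-admissibility of a tuple `μ̄ ∈ V^𝒞`: `μ_C − μ_{s_α(C)} ∈ ℝ α̌`. -/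
def QuasiAdmissibleV (μ : RS.ChamberT → V) : Prop :=
  ∀ C : RS.ChamberT, ∀ α ∈ RS.simples C.1, ∀ C' : RS.ChamberT,
    C'.1 = ⇑(RS.sAff α 0) '' C.1 → ∃ c : ℝ, μ C - μ C' = c • RS.coroot α

/-- `m`-regularity of a tuple `μ̄ ∈ V^𝒞`: `⟨α, μ_C⟩ ≥ m` for every `C ∈ 𝒞` and
`α ∈ Φ_C`. -/
def RegularVAt (m : ℝ) (μ : RS.ChamberT → V) : Prop :=
  ∀ C : RS.ChamberT, ∀ α ∈ RS.pos C.1, m ≤ α (μ C)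

/-- `m`-regularity of a tuple `w̄ ∈ W̃^𝒞`. -/
def RegularWAt (m : ℝ) (w : RS.ChamberT → Equiv.Perm V) : Prop :=
  RS.RegularVAt m (fun C => piL (w C))

/-- Regularity of a tuple `μ̄ ∈ V^𝒞`. -/
def RegularV (μ : RS.ChamberT → V) : Prop := ∃ m : ℝ, 0 < m ∧ RS.RegularVAt m μ

/-- Regularity of a tuple `w̄ ∈ W̃^𝒞`. -/
def RegularW (w : RS.ChamberT → Equiv.Perm V) : Prop := ∃ m : ℝ, 0 < m ∧ RS.RegularWAt m w

/-- `e` is the quasi-admissible tuple `ē_ψ` corresponding to the standard basis vector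
`e_ψ ∈ ℤ^Ψ`:  `(ē_ψ)_C = α̌` if `α ∈ Δ_C` corresponds to `ψ ∈ Ψ_C`, and `= 0` if
`ψ ∉ Ψ_C`. -/
def IsEPsiTuple (ψ : Module.Dual ℝ V) (e : RS.ChamberT → V) : Prop :=
  ∀ C : RS.ChamberT,
    (∀ α, RS.PairsIn C.1 ψ α → e C = RS.coroot α) ∧
      ((¬∃ α, RS.PairsIn C.1 ψ α) → e C = 0)

end RootSystemData

section Infra
set_option linter.unusedSectionVars false
set_option linter.unusedVariables false
open Module

variable {V : Type*} [AddCommGroup V] [Module ℝ V] [FiniteDimensional ℝ V]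
variable (RS : RootSystemData V)

namespace RootSystemData

/-- finset of roots -/
noncomputable def rFin : Finset (Module.Dual ℝ V) := RS.finite.toFinset

lemma mem_rFin {α : Module.Dual ℝ V} : α ∈ RS.rFin ↔ α ∈ RS.roots := by
  simp [rFin, Set.Finite.mem_toFinset]

lemma neg_mem {α : Module.Dual ℝ V} (h : α ∈ RS.roots) : -α ∈ RS.roots := by
  have := RS.reflect_mem α h α h
  rwa [RS.root_coroot_two α h, two_smul, show α - (α + α) = -α by abel] at this

lemma pairInt {α β : Module.Dual ℝ V} (hα : α ∈ RS.roots) (hβ : β ∈ RS.roots) :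
    ∃ n : ℤ, β (RS.coroot α) = (n : ℝ) := RS.crystallographic α hα β hβ

lemma sAff_apply {α : Module.Dual ℝ V} (h : α ∈ RS.roots) (n : ℤ) (x : V) :
    RS.sAff α n x = x - (α x + (n : ℝ)) • RS.coroot α := by
  rw [sAff, dif_pos (RS.root_coroot_two α h)]; rfl

/-- the invariant bilinear form -/
noncomputable def Bf (x y : V) : ℝ := ∑ α ∈ RS.rFin, α x * α y

lemma Bf_comm (x y : V) : RS.Bf x y = RS.Bf y x := by
  unfold Bf; exact Finset.sum_congr rfl fun α _ => mul_comm _ _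

lemma Bf_add_left (x x' y : V) : RS.Bf (x + x') y = RS.Bf x y + RS.Bf x' y := by
  unfold Bf; rw [← Finset.sum_add_distrib]
  exact Finset.sum_congr rfl fun α _ => by rw [map_add]; ring

lemma Bf_smul_left (c : ℝ) (x y : V) : RS.Bf (c • x) y = c * RS.Bf x y := by
  unfold Bf; rw [Finset.mul_sum]
  exact Finset.sum_congr rfl fun α _ => by rw [map_smul]; simp [smul_eq_mul]; ring

lemma Bf_sub_left (x x' y : V) : RS.Bf (x - x') y = RS.Bf x y - RS.Bf x' y := by
  have := RS.Bf_add_left (x - x') x' y; rw [sub_add_cancel] at this; linarith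

lemma Bf_nonneg (x : V) : 0 ≤ RS.Bf x x :=
  Finset.sum_nonneg fun α _ => mul_self_nonneg _

lemma eq_zero_of_root_apply_eq_zero {x : V} (h : ∀ α ∈ RS.roots, α x = 0) : x = 0 := by
  rw [← Module.forall_dual_apply_eq_zero_iff ℝ x]
  intro φ
  have hφ : φ ∈ Submodule.span ℝ RS.roots := RS.span_top ▸ Submodule.mem_top
  induction hφ using Submodule.span_induction with
  | mem f hf => exact h f hf
  | zero => rfl
  | add f g _ _ hf hg => simp [hf, hg]
  | smul c f _ hf => simp [hf]

lemma Bf_self_eq_zero {x : V} (h : RS.Bf x x = 0) : x = 0 := by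
  apply RS.eq_zero_of_root_apply_eq_zero
  intro α hα
  have h2 : ∀ β ∈ RS.rFin, β x * β x = 0 := by
    intro β hβ
    have := (Finset.sum_eq_zero_iff_of_nonneg (fun γ _ => mul_self_nonneg (γ x))).1 h β hβ
    exact this
  have := h2 α (RS.mem_rFin.2 hα)
  nlinarith [this]

/-- a "coroot datum" for root β : any c with β c = 2 whose reflection preserves roots -/
def CorootDatum (β : Module.Dual ℝ V) (c : V) : Prop :=
  β c = 2 ∧ ∀ α ∈ RS.roots, α - (α c) • β ∈ RS.roots

lemma corootDatum_coroot {β : Module.Dual ℝ V} (hβ : β ∈ RS.roots) :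
    RS.CorootDatum β (RS.coroot β) :=
  ⟨RS.root_coroot_two β hβ, fun α hα => RS.reflect_mem β hβ α hα⟩

lemma refl_perm_roots {β : Module.Dual ℝ V} {c : V} (hd : RS.CorootDatum β c) :
    ∀ α ∈ RS.rFin, (α - (α c) • β) ∈ RS.rFin := fun α hα =>
  RS.mem_rFin.2 (hd.2 α (RS.mem_rFin.1 hα))

lemma refl_invol {β : Module.Dual ℝ V} {c : V} (hd : RS.CorootDatum β c)
    (α : Module.Dual ℝ V) : (α - (α c) • β) - (((α - (α c) • β) c)) • β = α := by
  have h2 : β c = 2 := hd.1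
  simp only [LinearMap.sub_apply, LinearMap.smul_apply, smul_eq_mul, h2]
  module

/-- invariance of Bf under the reflection determined by a coroot datum -/
lemma Bf_refl_invariant {β : Module.Dual ℝ V} {c : V} (hd : RS.CorootDatum β c)
    (x y : V) : RS.Bf (x - β x • c) (y - β y • c) = RS.Bf x y := by
  unfold Bf
  rw [Finset.sum_nbij' (fun α => α - (α c) • β) (fun α => α - (α c) • β)]
  · intro α hα; exact RS.refl_perm_roots hd α hα
  · intro α hα; exact RS.refl_perm_roots hd α hα
  · intro α _; exact RS.refl_invol hd α
  · intro α _; exact RS.refl_invol hd α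
  · intro α _
    have h2 : β c = 2 := hd.1
    simp only [LinearMap.sub_apply, LinearMap.smul_apply, smul_eq_mul, map_sub, map_smul,
      smul_eq_mul]
    ring

lemma Bf_coroot_pairing {β : Module.Dual ℝ V} {c : V} (hd : RS.CorootDatum β c) (y : V) :
    2 * RS.Bf c y = RS.Bf c c * β y := by
  have h := RS.Bf_refl_invariant hd c y
  rw [hd.1] at h
  have e1 : c - (2:ℝ) • c = -c := by module
  rw [e1] at h
  have e2 : RS.Bf (-c) (y - β y • c) = -(RS.Bf c y - β y * RS.Bf c c) := by
    have := RS.Bf_sub_left y (β y • c) c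
    have h3 : RS.Bf (-c) (y - β y • c) = - RS.Bf c (y - β y • c) := by
      have := RS.Bf_smul_left (-1) c (y - β y • c); simpa using this
    rw [h3, RS.Bf_comm c (y - β y • c), RS.Bf_sub_left, RS.Bf_smul_left,
      RS.Bf_comm y c, RS.Bf_comm c c]
  rw [e2] at h
  linarith [h]

end RootSystemData
end Infra

section Infra2
set_option linter.unusedSectionVars false
set_option linter.unusedVariables false
set_option maxHeartbeats 1000000
open Module

variable {V : Type*} [AddCommGroup V] [Module ℝ V] [FiniteDimensional ℝ V]
variable (RS : RootSystemData V)

namespace RootSystemData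

lemma Bf_smul_right (c : ℝ) (x y : V) : RS.Bf x (c • y) = c * RS.Bf x y := by
  rw [RS.Bf_comm, RS.Bf_smul_left, RS.Bf_comm]

lemma Bf_sub_right (x y y' : V) : RS.Bf x (y - y') = RS.Bf x y - RS.Bf x y' := by
  rw [RS.Bf_comm, RS.Bf_sub_left, RS.Bf_comm y x, RS.Bf_comm y' x]

lemma Bf_zero_right (x : V) : RS.Bf x 0 = 0 := by
  have := RS.Bf_smul_right 0 x (0:V); simpa using this

lemma Bf_cc_pos {β : Module.Dual ℝ V} (hβ : β ∈ RS.roots) {c : V}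
    (hd : RS.CorootDatum β c) : 0 < RS.Bf c c := by
  have h4 : (β c) * (β c) = 4 := by rw [hd.1]; norm_num
  have : β c * β c ≤ RS.Bf c c := by
    unfold Bf
    exact Finset.single_le_sum (f := fun α => α c * α c)
      (fun γ _ => mul_self_nonneg _) (RS.mem_rFin.2 hβ)
  linarith

lemma coroot_unique {β : Module.Dual ℝ V} (hβ : β ∈ RS.roots) {c c' : V}
    (hd : RS.CorootDatum β c) (hd' : RS.CorootDatum β c') : c = c' := by
  have hc := RS.Bf_cc_pos hβ hd
  have hc' := RS.Bf_cc_pos hβ hd'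
  -- both (1/Bcc)•c and (1/Bc'c')•c' have Bf-pairing (1/2) β y against all y
  have key : ∀ y, RS.Bf ((RS.Bf c' c') • c - (RS.Bf c c) • c') y = 0 := by
    intro y
    rw [RS.Bf_sub_left, RS.Bf_smul_left, RS.Bf_smul_left]
    have h1 := RS.Bf_coroot_pairing hd y
    have h2 := RS.Bf_coroot_pairing hd' y
    nlinarith [h1, h2]
  have hz : (RS.Bf c' c') • c - (RS.Bf c c) • c' = 0 :=
    RS.Bf_self_eq_zero (key _)
  have hzz : (RS.Bf c' c') • c = (RS.Bf c c) • c' := by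
    rw [sub_eq_zero] at hz; exact hz
  have hβz : RS.Bf c' c' * 2 = RS.Bf c c * 2 := by
    have := congrArg β hzz
    simpa [map_smul, smul_eq_mul, hd.1, hd'.1] using this
  have hBeq : RS.Bf c c = RS.Bf c' c' := by linarith
  rw [hBeq] at hzz
  exact smul_right_injective V (ne_of_gt hc') hzz

lemma coroot_neg {β : Module.Dual ℝ V} (hβ : β ∈ RS.roots) :
    RS.coroot (-β) = -RS.coroot β := by
  refine RS.coroot_unique (RS.neg_mem hβ) (RS.corootDatum_coroot (RS.neg_mem hβ)) ?_
  constructor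
  · simp [RS.root_coroot_two β hβ]
  · intro α hα
    have := RS.reflect_mem β hβ α hα
    have e : α - α (-RS.coroot β) • -β = α - α (RS.coroot β) • β := by
      simp only [map_neg]; module
    rwa [e]

lemma coroot_reflect {β δ : Module.Dual ℝ V} (hβ : β ∈ RS.roots) (hδ : δ ∈ RS.roots) :
    RS.coroot (β - β (RS.coroot δ) • δ)
      = RS.coroot β - δ (RS.coroot β) • RS.coroot δ := by
  have hτ : β - β (RS.coroot δ) • δ ∈ RS.roots := RS.reflect_mem δ hδ β hβ
  refine RS.coroot_unique hτ (RS.corootDatum_coroot hτ) ?_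
  have h2β : β (RS.coroot β) = 2 := RS.root_coroot_two β hβ
  have h2δ : δ (RS.coroot δ) = 2 := RS.root_coroot_two δ hδ
  constructor
  · simp only [LinearMap.sub_apply, LinearMap.smul_apply, map_sub, map_smul, smul_eq_mul]
    rw [h2β, h2δ]; ring
  · intro α hα
    -- the reflection equals σδ ∘ σβ ∘ σδ on the dual side
    have key : α - α (RS.coroot β - δ (RS.coroot β) • RS.coroot δ) •
        (β - β (RS.coroot δ) • δ)
        = (fun γ => γ - γ (RS.coroot δ) • δ)
          ((fun γ => γ - γ (RS.coroot β) • β)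
            ((fun γ => γ - γ (RS.coroot δ) • δ) α)) := by
      simp only [map_sub, map_smul, LinearMap.sub_apply, LinearMap.smul_apply, smul_eq_mul]
      rw [h2δ]
      module
    rw [key]
    exact RS.reflect_mem δ hδ _ (RS.reflect_mem β hβ _ (RS.reflect_mem δ hδ _ hα))

lemma Bf_expand (x y : V) (t : ℝ) : RS.Bf (x - t • y) (x - t • y)
    = RS.Bf x x - 2 * t * RS.Bf x y + t * t * RS.Bf y y := by
  rw [RS.Bf_sub_left, RS.Bf_sub_right, RS.Bf_sub_right, RS.Bf_smul_left, RS.Bf_smul_left,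
    RS.Bf_smul_right, RS.Bf_smul_right, RS.Bf_comm y x]
  ring

lemma CS_eq_case {x y : V} (hy : 0 < RS.Bf y y)
    (heq : RS.Bf x y * RS.Bf x y = RS.Bf x x * RS.Bf y y) :
    x = (RS.Bf x y / RS.Bf y y) • y := by
  set t := RS.Bf x y / RS.Bf y y with ht
  have hz : RS.Bf (x - t • y) (x - t • y) = 0 := by
    rw [RS.Bf_expand, ht]
    field_simp
    ring_nf
    nlinarith [heq]
  have := RS.Bf_self_eq_zero hz
  rw [sub_eq_zero] at this; exact this

lemma CS_le (x y : V) : RS.Bf x y * RS.Bf x y ≤ RS.Bf x x * RS.Bf y y := by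
  rcases le_or_gt (RS.Bf y y) 0 with h | h
  · have h0 : RS.Bf y y = 0 := le_antisymm h (RS.Bf_nonneg y)
    have : y = 0 := RS.Bf_self_eq_zero h0
    subst this
    rw [RS.Bf_zero_right, h0]; simp
  · by_contra hlt
    push_neg at hlt
    set t := RS.Bf x y / RS.Bf y y
    have h0 : 0 ≤ RS.Bf (x - t • y) (x - t • y) := RS.Bf_nonneg _
    rw [RS.Bf_expand] at h0
    have ht : t = RS.Bf x y / RS.Bf y y := rfl
    rw [ht] at h0
    have hyne : RS.Bf y y ≠ 0 := ne_of_gt h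
    have h0' : 0 ≤ (RS.Bf x x - 2 * (RS.Bf x y / RS.Bf y y) * RS.Bf x y
        + RS.Bf x y / RS.Bf y y * (RS.Bf x y / RS.Bf y y) * RS.Bf y y) * RS.Bf y y :=
      mul_nonneg h0 (le_of_lt h)
    have hyne2 : RS.Bf y y ≠ 0 := ne_of_gt h
    have hexp : (RS.Bf x x - 2 * (RS.Bf x y / RS.Bf y y) * RS.Bf x y
        + RS.Bf x y / RS.Bf y y * (RS.Bf x y / RS.Bf y y) * RS.Bf y y) * RS.Bf y y
        = RS.Bf x x * RS.Bf y y - RS.Bf x y * RS.Bf x y := by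
      field_simp
      ring
    rw [hexp] at h0'
    linarith

/-- recover the root functional from its coroot via Bf -/
lemma root_from_coroot {β : Module.Dual ℝ V} (hβ : β ∈ RS.roots) (v : V) :
    β v = 2 * RS.Bf (RS.coroot β) v / RS.Bf (RS.coroot β) (RS.coroot β) := by
  have hp := RS.Bf_coroot_pairing (RS.corootDatum_coroot hβ) v
  have hc := RS.Bf_cc_pos hβ (RS.corootDatum_coroot hβ)
  field_simp
  linarith

/-- pairing products: for non-proportional roots, the product of pairings is ≤ 3 and
    same-signed -/
lemma pairing_bound {α δ : Module.Dual ℝ V} (hα : α ∈ RS.roots) (hδ : δ ∈ RS.roots)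
    (hne : α ≠ δ) (hne' : α ≠ -δ) :
    α (RS.coroot δ) * δ (RS.coroot α) < 4 ∧
      0 ≤ α (RS.coroot δ) * δ (RS.coroot α) := by
  set a := RS.coroot α
  set d := RS.coroot δ
  have ha : 0 < RS.Bf a a := RS.Bf_cc_pos hα (RS.corootDatum_coroot hα)
  have hd : 0 < RS.Bf d d := RS.Bf_cc_pos hδ (RS.corootDatum_coroot hδ)
  have h1 : α d = 2 * RS.Bf a d / RS.Bf a a := RS.root_from_coroot hα d
  have h2 : δ a = 2 * RS.Bf d a / RS.Bf d d := RS.root_from_coroot hδ a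
  have hsym : RS.Bf a d = RS.Bf d a := RS.Bf_comm _ _
  have hprod : α d * δ a = 4 * (RS.Bf a d * RS.Bf a d) / (RS.Bf a a * RS.Bf d d) := by
    rw [h1, h2, hsym]; field_simp; ring
  constructor
  · rw [hprod]
    rw [div_lt_iff₀ (by positivity)]
    have hCS := RS.CS_le a d
    rcases eq_or_lt_of_le hCS with hEq | hLt
    · exfalso
      have hxy := RS.CS_eq_case hd hEq
      -- α is then proportional to δ
      set t := RS.Bf a d / RS.Bf d d
      have hfun : ∀ v, α v = (t * RS.Bf d d / RS.Bf a a * 2 / 2) * δ v := by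
        intro v
        have e1 : α v = 2 * RS.Bf a v / RS.Bf a a := RS.root_from_coroot hα v
        have e2 : δ v = 2 * RS.Bf d v / RS.Bf d d := RS.root_from_coroot hδ v
        rw [e1, e2]
        have : RS.Bf a v = t * RS.Bf d v := by
          rw [hxy]; exact RS.Bf_smul_left t d v
        rw [this]
        field_simp
      set s := t * RS.Bf d d / RS.Bf a a * 2 / 2
      have hαs : α = s • δ := by
        ext v; simpa [smul_eq_mul] using hfun v
      have hs : s • δ ∈ RS.roots := hαs ▸ hα
      rcases RS.reduced δ hδ s hs with h1' | h1'
      · exact hne (by rw [hαs, h1', one_smul])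
      · exact hne' (by rw [hαs, h1']; module)
    · linarith
  · rw [hprod]
    exact div_nonneg (by nlinarith [mul_self_nonneg (RS.Bf a d)]) (by positivity)

end RootSystemData
end Infra2

section Infra3
set_option linter.unusedSectionVars false
set_option linter.unusedVariables false
set_option maxHeartbeats 1000000
open Module

variable {V : Type*} [AddCommGroup V] [Module ℝ V] [FiniteDimensional ℝ V]
variable (RS : RootSystemData V)

namespace RootSystemData

end RootSystemData

/-- positive part of a sub-root-set w.r.t. a vector -/
def RSPS (Φ₀ : Set (Module.Dual ℝ V)) (v : V) : Set (Module.Dual ℝ V) :=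
  {α | α ∈ Φ₀ ∧ 0 < α v}

namespace RootSystemData

/-- a subsystem: subset of roots closed under its own reflections -/
def SubSys (Φ₀ : Set (Module.Dual ℝ V)) : Prop :=
  Φ₀ ⊆ RS.roots ∧ ∀ α ∈ Φ₀, ∀ δ ∈ Φ₀, α - α (RS.coroot δ) • δ ∈ Φ₀

lemma subsys_neg {Φ₀ : Set (Module.Dual ℝ V)} (h : RS.SubSys Φ₀)
    {α : Module.Dual ℝ V} (hα : α ∈ Φ₀) : -α ∈ Φ₀ := by
  have := h.2 α hα α hα
  rwa [RS.root_coroot_two α (h.1 hα), two_smul, show α - (α + α) = -α by abel] at this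

lemma subsys_roots : RS.SubSys RS.roots :=
  ⟨fun _ h => h, fun α hα δ hδ => RS.reflect_mem δ hδ α hα⟩

lemma pairing_same_sign {α δ : Module.Dual ℝ V} (hα : α ∈ RS.roots) (hδ : δ ∈ RS.roots)
    (h : 0 < α (RS.coroot δ)) : 0 < δ (RS.coroot α) := by
  set a := RS.coroot α
  set d := RS.coroot δ
  have ha : 0 < RS.Bf a a := RS.Bf_cc_pos hα (RS.corootDatum_coroot hα)
  have hd : 0 < RS.Bf d d := RS.Bf_cc_pos hδ (RS.corootDatum_coroot hδ)
  have h1 : α d = 2 * RS.Bf a d / RS.Bf a a := RS.root_from_coroot hα d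
  have h2 : δ a = 2 * RS.Bf d a / RS.Bf d d := RS.root_from_coroot hδ a
  have hsym : RS.Bf a d = RS.Bf d a := RS.Bf_comm _ _
  rw [h1] at h
  rw [h2, ← hsym]
  have hBpos : 0 < RS.Bf a d := by
    by_contra hc
    push_neg at hc
    have : 2 * RS.Bf a d / RS.Bf a a ≤ 0 := by
      apply div_nonpos_of_nonpos_of_nonneg <;> nlinarith
    linarith
  positivity

/-- integer pairing, with positivity transfer -/
lemma pair_int_pos {α δ : Module.Dual ℝ V} (hα : α ∈ RS.roots) (hδ : δ ∈ RS.roots)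
    (hne : α ≠ δ) (hne' : α ≠ -δ) {kz : ℤ} (hk : α (RS.coroot δ) = (kz : ℝ))
    (hkpos : 1 ≤ kz) : ∃ lz : ℤ, δ (RS.coroot α) = (lz : ℝ) ∧ 1 ≤ lz ∧ kz * lz ≤ 3 := by
  obtain ⟨lz, hl⟩ := RS.pairInt hα hδ
  refine ⟨lz, hl, ?_, ?_⟩
  · have := RS.pairing_same_sign hα hδ (by rw [hk]; exact_mod_cast hkpos)
    rw [hl] at this
    exact_mod_cast this
  · have hb := (RS.pairing_bound hα hδ hne hne').1
    rw [hk, hl] at hb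
    have : (kz * lz : ℝ) < 4 := by push_cast; linarith
    have : (kz * lz : ℤ) < 4 := by exact_mod_cast this
    omega

/-- if the pairing is positive, the difference is in the subsystem -/
lemma sub_mem_of_pairing_pos {Φ₀ : Set (Module.Dual ℝ V)} (hS : RS.SubSys Φ₀)
    {α δ : Module.Dual ℝ V} (hα : α ∈ Φ₀) (hδ : δ ∈ Φ₀) (hne : α ≠ δ) (hne' : α ≠ -δ)
    {kz : ℤ} (hk : α (RS.coroot δ) = (kz : ℝ)) (hkpos : 1 ≤ kz) : α - δ ∈ Φ₀ := by
  obtain ⟨lz, hl, hl1, hprod⟩ := RS.pair_int_pos (hS.1 hα) (hS.1 hδ) hne hne' hk hkpos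
  rcases eq_or_lt_of_le hkpos with h1 | h2
  · have := hS.2 α hα δ hδ
    rw [hk, ← h1] at this
    simpa using this
  · have hlz : lz = 1 := by nlinarith
    have := hS.2 δ hδ α hα
    rw [hl, hlz] at this
    simp only [Int.cast_one, one_smul] at this
    have := RS.subsys_neg hS this
    rwa [neg_sub] at this

end RootSystemData

lemma simplesOf_decomp {V : Type*} [AddCommGroup V] [Module ℝ V]
    {P : Set (Module.Dual ℝ V)} {δ : Module.Dual ℝ V}
    (hδ : δ ∈ simplesOf P) {β γ : Module.Dual ℝ V} (hβ : β ∈ P) (hγ : γ ∈ P)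
    (h : δ = β + γ) : False := hδ.2 ⟨β, hβ, γ, hγ, h⟩

namespace RootSystemData

/-- KEY LEMMA: a simple reflection permutes the other positive roots -/
lemma simple_reflect_mem {Φ₀ : Set (Module.Dual ℝ V)} (hS : RS.SubSys Φ₀)
    {v : V} (hv : RS.IsRegularPt v) {δ α : Module.Dual ℝ V}
    (hδ : δ ∈ simplesOf (RSPS Φ₀ v)) (hα : α ∈ RSPS Φ₀ v) (hne : α ≠ δ) :
    α - α (RS.coroot δ) • δ ∈ RSPS Φ₀ v := by
  obtain ⟨hαΦ, hαv⟩ := hα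
  obtain ⟨hδΦ, hδv⟩ := hδ.1
  have hσΦ : α - α (RS.coroot δ) • δ ∈ Φ₀ := hS.2 α hαΦ δ hδΦ
  obtain ⟨kz, hk⟩ := RS.pairInt (hS.1 hδΦ) (hS.1 hαΦ)
  have hne' : α ≠ -δ := by
    intro h; rw [h] at hαv; simp only [LinearMap.neg_apply] at hαv; linarith
  -- value of α - j δ at v
  have hval : ∀ j : ℝ, (α - j • δ) v = α v - j * δ v := by
    intro j; simp [smul_eq_mul]
  rcases le_or_gt kz 0 with hk0 | hk1
  · refine ⟨hσΦ, ?_⟩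
    rw [hk, hval]
    have : (kz:ℝ) ≤ 0 := by exact_mod_cast hk0
    nlinarith
  -- now kz ≥ 1
  have hkz1 : 1 ≤ kz := hk1
  -- bridge: if β ∈ PS and β - δ ∈ Φ₀ has negative value, contradiction with simplicity
  have bridge : ∀ β, β ∈ Φ₀ → 0 < β v → (β - δ) ∈ Φ₀ → (β - δ) v < 0 → False := by
    intro β hβΦ hβv hβδΦ hβδv
    have hmem1 : β ∈ RSPS Φ₀ v := ⟨hβΦ, hβv⟩
    have hmem2 : δ - β ∈ RSPS Φ₀ v := by
      refine ⟨?_, ?_⟩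
      · have := RS.subsys_neg hS hβδΦ; rwa [neg_sub] at this
      · have : (δ - β) v = -((β - δ) v) := by
          simp only [LinearMap.sub_apply]; ring
        rw [this]; linarith
    exact simplesOf_decomp hδ hmem1 hmem2 (by abel)
  have hregval : ∀ β ∈ Φ₀, β v ≠ 0 := fun β hβ => hv β (hS.1 hβ)
  obtain ⟨lz, hl, hl1, hprod⟩ :=
    RS.pair_int_pos (hS.1 hαΦ) (hS.1 hδΦ) hne hne' hk hkz1
  have hkz3 : kz ≤ 3 := by nlinarith
  have hαδΦ : α - δ ∈ Φ₀ := RS.sub_mem_of_pairing_pos hS hαΦ hδΦ hne hne' hk hkz1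
  -- rewrite the target via kz
  rw [hk]
  interval_cases kz
  · -- kz = 1 : target is α - δ
    have e : α - ((1:ℤ):ℝ) • δ = α - δ := by push_cast; module
    rw [e]
    rcases lt_or_gt_of_ne (hregval _ hαδΦ) with hneg | hpos
    · exact absurd (bridge α hαΦ hαv hαδΦ hneg) id
    · exact ⟨hαδΦ, hpos⟩
  · -- kz = 2 : target is α - 2δ
    have hα2Φ : α - ((2:ℤ):ℝ) • δ ∈ Φ₀ := by rw [← hk]; exact hσΦ
    have e2 : ((α - δ) - δ) = α - ((2:ℤ):ℝ) • δ := by push_cast; module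
    rcases lt_or_gt_of_ne (hregval _ hαδΦ) with hneg | hpos
    · exact absurd (bridge α hαΦ hαv hαδΦ hneg) id
    · rcases lt_or_gt_of_ne (hregval _ hα2Φ) with hneg2 | hpos2
      · exfalso
        refine bridge (α - δ) hαδΦ hpos (by rw [e2]; exact hα2Φ) ?_
        rw [e2]; exact hneg2
      · exact ⟨hα2Φ, hpos2⟩
  · -- kz = 3 : target is α - 3δ
    have hα3Φ : α - ((3:ℤ):ℝ) • δ ∈ Φ₀ := by rw [← hk]; exact hσΦ
    -- (α - δ)(coroot δ) = 1
    have hp1 : (α - δ) (RS.coroot δ) = ((1:ℤ):ℝ) := by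
      simp only [LinearMap.sub_apply]
      rw [hk, RS.root_coroot_two δ (hS.1 hδΦ)]
      push_cast; ring
    have hα2Φ : (α - δ) - δ ∈ Φ₀ := by
      have := hS.2 (α - δ) hαδΦ δ hδΦ
      rw [hp1] at this
      simpa using this
    have e2 : (α - δ) - δ = α - (2:ℝ) • δ := by module
    have e3 : (α - (2:ℝ) • δ) - δ = α - ((3:ℤ):ℝ) • δ := by push_cast; module
    rcases lt_or_gt_of_ne (hregval _ hαδΦ) with hneg | hpos
    · exact absurd (bridge α hαΦ hαv hαδΦ hneg) id
    · rcases lt_or_gt_of_ne (hregval _ hα2Φ) with hneg2 | hpos2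
      · exact absurd (bridge (α - δ) hαδΦ hpos hα2Φ hneg2) id
      · rcases lt_or_gt_of_ne (hregval _ hα3Φ) with hneg3 | hpos3
        · exfalso
          refine bridge (α - (2:ℝ) • δ) (by rw [← e2]; exact hα2Φ) (by rw [← e2]; exact hpos2)
            (by rw [e3]; exact hα3Φ) ?_
          rw [e3]; exact hneg3
        · exact ⟨hα3Φ, hpos3⟩

end RootSystemData
end Infra3

section Infra4
set_option linter.unusedSectionVars false
set_option linter.unusedVariables false
set_option maxHeartbeats 1000000
open Module

variable {V : Type*} [AddCommGroup V] [Module ℝ V] [FiniteDimensional ℝ V]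
variable (RS : RootSystemData V)

namespace RootSystemData

/-- induction principle on positive roots via decomposition into simples -/
lemma ps_induction {Φ₀ : Set (Module.Dual ℝ V)} (hsub : Φ₀ ⊆ RS.roots) (v : V)
    {Q : Module.Dual ℝ V → Prop}
    (hsimp : ∀ τ ∈ simplesOf (RSPS Φ₀ v), Q τ)
    (hadd : ∀ β γ, β ∈ RSPS Φ₀ v → γ ∈ RSPS Φ₀ v → Q β → Q γ →
      β + γ ∈ RSPS Φ₀ v → Q (β + γ)) :
    ∀ α ∈ RSPS Φ₀ v, Q α := by
  set m : Module.Dual ℝ V → ℕ := fun α => (RS.rFin.filter (fun β => β v ≤ α v)).card with hm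
  suffices h : ∀ n, ∀ α ∈ RSPS Φ₀ v, m α ≤ n → Q α by
    intro α hα; exact h (m α) α hα le_rfl
  intro n
  induction n with
  | zero =>
    intro α hα h0
    exfalso
    have : α ∈ RS.rFin.filter (fun β => β v ≤ α v) :=
      Finset.mem_filter.2 ⟨RS.mem_rFin.2 (hsub hα.1), le_rfl⟩
    have hpos := Finset.card_pos.2 ⟨α, this⟩
    have heq : m α = (RS.rFin.filter (fun β => β v ≤ α v)).card := rfl
    omega
  | succ n ih =>
    intro α hα hle
    by_cases hs : α ∈ simplesOf (RSPS Φ₀ v)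
    · exact hsimp α hs
    · have hdec : ∃ β ∈ RSPS Φ₀ v, ∃ γ ∈ RSPS Φ₀ v, α = β + γ := by
        by_contra hc
        exact hs ⟨hα, hc⟩
      obtain ⟨β, hβ, γ, hγ, hαβγ⟩ := hdec
      have hval : α v = β v + γ v := by rw [hαβγ]; simp
      have hβlt : β v < α v := by have := hγ.2; linarith
      have hγlt : γ v < α v := by have := hβ.2; linarith
      have hmlt : ∀ τ, τ ∈ RSPS Φ₀ v → τ v < α v → m τ < m α := by
        intro τ hτ hτv
        apply Finset.card_lt_card
        constructor
        · intro x hx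
          rcases Finset.mem_filter.1 hx with ⟨h1, h2⟩
          exact Finset.mem_filter.2 ⟨h1, by linarith⟩
        · intro hsub2
          have hαmem : α ∈ RS.rFin.filter (fun β => β v ≤ α v) :=
            Finset.mem_filter.2 ⟨RS.mem_rFin.2 (hsub hα.1), le_rfl⟩
          have := hsub2 hαmem
          rcases Finset.mem_filter.1 this with ⟨_, h2⟩
          linarith
      have hQβ := ih β hβ (by have := hmlt β hβ hβlt; omega)
      have hQγ := ih γ hγ (by have := hmlt γ hγ hγlt; omega)
      rw [hαβγ]
      exact hadd β γ hβ hγ hQβ hQγ (hαβγ ▸ hα)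

/-- canonical chamber set of a regular vector -/
def CH (v : V) : Set V := {x | ∀ α ∈ RS.roots, 0 < α v → 0 < α x}

lemma mem_CH_self {v : V} : v ∈ RS.CH v := fun α _ h => h

lemma CH_isChamber {v : V} (hv : RS.IsRegularPt v) : RS.IsChamber (RS.CH v) :=
  ⟨v, hv, rfl⟩

lemma isChamber_ex {C : Set V} (h : RS.IsChamber C) :
    ∃ v, RS.IsRegularPt v ∧ C = RS.CH v := h

lemma CH_eq' (v : V) : RS.CH v = {x | ∀ α ∈ RSPS RS.roots v, 0 < α x} := by
  ext x
  constructor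
  · intro h α hα; exact h α hα.1 hα.2
  · intro h α hα hαv; exact h α ⟨hα, hαv⟩

lemma pos_CH {v : V} (hv : RS.IsRegularPt v) : RS.pos (RS.CH v) = RSPS RS.roots v := by
  ext α
  constructor
  · rintro ⟨hα, h⟩; exact ⟨hα, h v RS.mem_CH_self⟩
  · rintro ⟨hα, h⟩; exact ⟨hα, fun x hx => hx α hα h⟩

lemma CH_eq_of_ps_eq {v w : V} (h : RSPS RS.roots v = RSPS RS.roots w) :
    RS.CH v = RS.CH w := by rw [RS.CH_eq', RS.CH_eq', h]

/-- dual reflection as a map on functionals -/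
def rd (δ : Module.Dual ℝ V) (α : Module.Dual ℝ V) : Module.Dual ℝ V :=
  α - α (RS.coroot δ) • δ

lemma rd_invol {δ : Module.Dual ℝ V} (hδ : δ ∈ RS.roots) (α : Module.Dual ℝ V) :
    RS.rd δ (RS.rd δ α) = α := by
  unfold rd
  have h2 : δ (RS.coroot δ) = 2 := RS.root_coroot_two δ hδ
  simp only [LinearMap.sub_apply, LinearMap.smul_apply, smul_eq_mul, h2]
  module

lemma rd_apply_sAff {δ : Module.Dual ℝ V} (hδ : δ ∈ RS.roots) (α : Module.Dual ℝ V)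
    (x : V) : α (RS.sAff δ 0 x) = (RS.rd δ α) x := by
  rw [RS.sAff_apply hδ]
  unfold rd
  simp only [map_sub, map_smul, LinearMap.sub_apply, LinearMap.smul_apply, smul_eq_mul]
  push_cast
  ring

lemma rd_self {δ : Module.Dual ℝ V} (hδ : δ ∈ RS.roots) : RS.rd δ δ = -δ := by
  unfold rd
  rw [RS.root_coroot_two δ hδ]
  module

lemma rd_mem_roots {δ : Module.Dual ℝ V} (hδ : δ ∈ RS.roots) {α : Module.Dual ℝ V}
    (hα : α ∈ RS.roots) : RS.rd δ α ∈ RS.roots := RS.reflect_mem δ hδ α hα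

lemma sAff_invol {δ : Module.Dual ℝ V} (hδ : δ ∈ RS.roots) (x : V) :
    RS.sAff δ 0 (RS.sAff δ 0 x) = x := by
  rw [RS.sAff_apply hδ, RS.sAff_apply hδ]
  have h2 : δ (RS.coroot δ) = 2 := RS.root_coroot_two δ hδ
  simp only [map_sub, map_smul, smul_eq_mul, h2]
  push_cast
  module

lemma regular_sAff {δ : Module.Dual ℝ V} (hδ : δ ∈ RS.roots) {v : V}
    (hv : RS.IsRegularPt v) : RS.IsRegularPt (RS.sAff δ 0 v) := by
  intro α hα
  rw [RS.rd_apply_sAff hδ]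
  exact hv _ (RS.rd_mem_roots hδ hα)

lemma image_CH {δ : Module.Dual ℝ V} (hδ : δ ∈ RS.roots) (v : V) :
    (⇑(RS.sAff δ 0)) '' RS.CH v = RS.CH (RS.sAff δ 0 v) := by
  ext y
  constructor
  · rintro ⟨x, hx, rfl⟩
    intro α hα hαv
    rw [RS.rd_apply_sAff hδ] at hαv ⊢
    exact hx _ (RS.rd_mem_roots hδ hα) hαv
  · intro hy
    refine ⟨RS.sAff δ 0 y, ?_, RS.sAff_invol hδ y⟩
    intro α hα hαv
    rw [RS.rd_apply_sAff hδ]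
    apply hy _ (RS.rd_mem_roots hδ hα)
    rw [RS.rd_apply_sAff hδ, RS.rd_invol hδ]
    exact hαv

/-- positive set after crossing a simple wall -/
lemma ps_reflect {Φ₀ : Set (Module.Dual ℝ V)} (hS : RS.SubSys Φ₀) {v : V}
    (hv : RS.IsRegularPt v) {δ : Module.Dual ℝ V} (hδ : δ ∈ simplesOf (RSPS Φ₀ v)) :
    RSPS Φ₀ (RS.sAff δ 0 v) = (RSPS Φ₀ v \ {δ}) ∪ {-δ} := by
  have hδΦ := hδ.1.1
  have hδr := hS.1 hδΦ
  have hmemσ : ∀ α, α ∈ RSPS Φ₀ (RS.sAff δ 0 v) ↔ (α ∈ Φ₀ ∧ 0 < (RS.rd δ α) v) := by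
    intro α
    constructor
    · rintro ⟨h1, h2⟩; rw [RS.rd_apply_sAff hδr] at h2; exact ⟨h1, h2⟩
    · rintro ⟨h1, h2⟩; rw [← RS.rd_apply_sAff hδr] at h2; exact ⟨h1, h2⟩
  ext α
  rw [hmemσ]
  constructor
  · rintro ⟨hαΦ, hαv⟩
    by_cases hαδ : α = -δ
    · right; simp [hαδ]
    · left
      have hαδ' : α ≠ δ := by
        intro h
        rw [h, RS.rd_self hδr] at hαv
        simp only [LinearMap.neg_apply] at hαv
        have := hδ.1.2
        linarith
      refine ⟨⟨hαΦ, ?_⟩, hαδ'⟩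
      by_contra hc
      push_neg at hc
      have hαvne : α v ≠ 0 := hv α (hS.1 hαΦ)
      have hαvneg : α v < 0 := lt_of_le_of_ne hc hαvne
      have hnegmem : -α ∈ RSPS Φ₀ v := ⟨RS.subsys_neg hS hαΦ, by
        simp only [LinearMap.neg_apply]; linarith⟩
      have hne2 : -α ≠ δ := by
        intro h; apply hαδ; rw [← h]; module
      have := RS.simple_reflect_mem hS hv hδ hnegmem hne2
      have h2 := this.2
      have e : (-α - (-α) (RS.coroot δ) • δ) v = -((RS.rd δ α) v) := by
        unfold rd
        simp only [LinearMap.sub_apply, LinearMap.smul_apply, LinearMap.neg_apply,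
          smul_eq_mul]
        ring
      rw [e] at h2
      linarith
  · rintro (⟨hα, hne⟩ | hα)
    · have hne' : α ≠ δ := hne
      have := RS.simple_reflect_mem hS hv hδ hα hne'
      exact ⟨hα.1, this.2⟩
    · simp only [Set.mem_singleton_iff] at hα
      subst hα
      refine ⟨RS.subsys_neg hS hδΦ, ?_⟩
      have : RS.rd δ (-δ) = δ := by
        have := RS.rd_self hδr
        unfold rd at this ⊢
        simp only [LinearMap.neg_apply, neg_smul, map_neg] at *
        rw [show -δ - -(δ (RS.coroot δ)) • δ = -(δ - (δ (RS.coroot δ)) • δ) by module, this]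
        module
      rw [this]
      exact hδ.1.2

end RootSystemData
end Infra4

section Infra5
set_option linter.unusedSectionVars false
set_option linter.unusedVariables false
set_option maxHeartbeats 1000000
open Module

variable {V : Type*} [AddCommGroup V] [Module ℝ V] [FiniteDimensional ℝ V]
variable (RS : RootSystemData V)

lemma transl_apply (μ x : V) : transl μ x = μ + x := rfl

lemma transl_mul (μ ν : V) : transl μ * transl ν = transl (μ + ν) := by
  ext x
  show transl μ (transl ν x) = transl (μ + ν) x
  rw [transl_apply, transl_apply, transl_apply, add_assoc]

lemma transl_zero : transl (0 : V) = 1 := by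
  ext x; simp [transl]

namespace RootSystemData

/-- affine maps compatible with the root system -/
def Nice0 (z : Equiv.Perm V) : Prop :=
  ∀ α ∈ RS.roots, (∃ k : ℤ, α (z 0) = (k : ℝ)) ∧
    ∃ β ∈ RS.roots, ∀ x, α (z x) = β x + α (z 0)

def Nice (z : Equiv.Perm V) : Prop := RS.Nice0 z ∧ RS.Nice0 z⁻¹

lemma nice0_one : RS.Nice0 1 := by
  intro α hα
  refine ⟨⟨0, by simp⟩, α, hα, by simp⟩

lemma nice0_mul {z₁ z₂ : Equiv.Perm V} (h₁ : RS.Nice0 z₁) (h₂ : RS.Nice0 z₂) :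
    RS.Nice0 (z₁ * z₂) := by
  intro α hα
  obtain ⟨⟨k₁, hk₁⟩, β₁, hβ₁, hf₁⟩ := h₁ α hα
  obtain ⟨⟨k₂, hk₂⟩, β₂, hβ₂, hf₂⟩ := h₂ β₁ hβ₁
  constructor
  · refine ⟨k₂ + k₁, ?_⟩
    rw [Equiv.Perm.mul_apply, hf₁ (z₂ 0), hk₁, hk₂]
    push_cast; ring
  · refine ⟨β₂, hβ₂, fun x => ?_⟩
    rw [Equiv.Perm.mul_apply, Equiv.Perm.mul_apply, hf₁ (z₂ x), hf₁ (z₂ 0), hf₂ x]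
    ring

lemma nice_one : RS.Nice 1 := ⟨RS.nice0_one, by rw [inv_one]; exact RS.nice0_one⟩

lemma nice_mul {z₁ z₂ : Equiv.Perm V} (h₁ : RS.Nice z₁) (h₂ : RS.Nice z₂) :
    RS.Nice (z₁ * z₂) :=
  ⟨RS.nice0_mul h₁.1 h₂.1, by rw [mul_inv_rev]; exact RS.nice0_mul h₂.2 h₁.2⟩

lemma nice_inv {z : Equiv.Perm V} (h : RS.Nice z) : RS.Nice z⁻¹ :=
  ⟨h.2, by rw [inv_inv]; exact h.1⟩

lemma sAffn_invol {δ : Module.Dual ℝ V} (hδ : δ ∈ RS.roots) (n : ℤ) (x : V) :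
    RS.sAff δ n (RS.sAff δ n x) = x := by
  rw [RS.sAff_apply hδ, RS.sAff_apply hδ]
  have h2 : δ (RS.coroot δ) = 2 := RS.root_coroot_two δ hδ
  simp only [map_sub, map_smul, smul_eq_mul, h2]
  module

lemma sAff_mul_self {δ : Module.Dual ℝ V} (hδ : δ ∈ RS.roots) (n : ℤ) :
    RS.sAff δ n * RS.sAff δ n = 1 := by
  ext x
  rw [Equiv.Perm.mul_apply]
  exact RS.sAffn_invol hδ n x

lemma sAff_inv {δ : Module.Dual ℝ V} (hδ : δ ∈ RS.roots) (n : ℤ) :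
    (RS.sAff δ n)⁻¹ = RS.sAff δ n :=
  inv_eq_of_mul_eq_one_left (RS.sAff_mul_self hδ n)

lemma sAff_apply_val {δ : Module.Dual ℝ V} (hδ : δ ∈ RS.roots) (n : ℤ)
    (α : Module.Dual ℝ V) (x : V) :
    α (RS.sAff δ n x) = (RS.rd δ α) x - (n : ℝ) * α (RS.coroot δ) := by
  rw [RS.sAff_apply hδ]
  unfold rd
  simp only [map_sub, map_smul, LinearMap.sub_apply, LinearMap.smul_apply, smul_eq_mul]
  ring

lemma nice0_sAff {δ : Module.Dual ℝ V} (hδ : δ ∈ RS.roots) (n : ℤ) :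
    RS.Nice0 (RS.sAff δ n) := by
  intro α hα
  obtain ⟨k, hk⟩ := RS.pairInt hδ hα
  constructor
  · refine ⟨-n * k, ?_⟩
    rw [RS.sAff_apply_val hδ]
    unfold rd
    simp only [LinearMap.sub_apply, LinearMap.smul_apply, smul_eq_mul, map_zero]
    rw [hk]; push_cast; ring
  · refine ⟨RS.rd δ α, RS.rd_mem_roots hδ hα, fun x => ?_⟩
    rw [RS.sAff_apply_val hδ, RS.sAff_apply_val hδ]
    unfold rd
    simp only [LinearMap.sub_apply, LinearMap.smul_apply, smul_eq_mul, map_zero]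
    ring

lemma nice_sAff {δ : Module.Dual ℝ V} (hδ : δ ∈ RS.roots) (n : ℤ) :
    RS.Nice (RS.sAff δ n) := by
  constructor
  · exact RS.nice0_sAff hδ n
  · rw [RS.sAff_inv hδ]; exact RS.nice0_sAff hδ n

lemma nice_affWeyl {z : Equiv.Perm V} (hz : z ∈ RS.affWeyl) : RS.Nice z := by
  unfold affWeyl affWeylOf at hz
  induction hz using Subgroup.closure_induction with
  | mem g hg =>
    obtain ⟨α, hα, n, rfl⟩ := hg
    exact RS.nice_sAff hα.1 n
  | one => exact RS.nice_one
  | mul x y hx hy hx' hy' => exact RS.nice_mul hx' hy'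
  | inv x hx hx' => exact RS.nice_inv hx'

/-- lattice vectors pair integrally with roots -/
def IntVec (lam : V) : Prop := ∀ β ∈ RS.roots, ∃ k : ℤ, β lam = (k : ℝ)

lemma intVec_lattice {μ : V} (hμ : μ ∈ RS.corootLattice) : RS.IntVec μ := by
  unfold corootLattice at hμ
  induction hμ using AddSubgroup.closure_induction with
  | mem x hx =>
    obtain ⟨α, hα, rfl⟩ := hx
    intro β hβ
    exact RS.pairInt hα hβ
  | zero => intro β hβ; exact ⟨0, by simp⟩
  | add x y hx hy hx' hy' =>
    intro β hβ
    obtain ⟨k₁, h₁⟩ := hx' β hβ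
    obtain ⟨k₂, h₂⟩ := hy' β hβ
    exact ⟨k₁ + k₂, by rw [map_add, h₁, h₂]; push_cast; ring⟩
  | neg x hx hx' =>
    intro β hβ
    obtain ⟨k, h⟩ := hx' β hβ
    exact ⟨-k, by rw [map_neg, h]; push_cast; ring⟩

lemma intVec_zero : RS.IntVec 0 := fun β _ => ⟨0, by simp⟩

lemma intVec_add {lam ν : V} (h₁ : RS.IntVec lam) (h₂ : RS.IntVec ν) :
    RS.IntVec (lam + ν) := by
  intro β hβ
  obtain ⟨k₁, e₁⟩ := h₁ β hβ
  obtain ⟨k₂, e₂⟩ := h₂ β hβ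
  exact ⟨k₁ + k₂, by rw [map_add, e₁, e₂]; push_cast; ring⟩

lemma intVec_smul_coroot {γ : Module.Dual ℝ V} (hγ : γ ∈ RS.roots) (N : ℤ) :
    RS.IntVec ((N : ℝ) • RS.coroot γ) := by
  intro β hβ
  obtain ⟨k, hk⟩ := RS.pairInt hγ hβ
  exact ⟨N * k, by rw [map_smul, smul_eq_mul, hk]; push_cast; ring⟩

lemma nice0_transl {lam : V} (h : RS.IntVec lam) : RS.Nice0 (transl lam) := by
  intro α hα
  obtain ⟨k, hk⟩ := h α hα
  constructor
  · exact ⟨k, by rw [transl_apply]; simpa using hk⟩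
  · exact ⟨α, hα, fun x => by
      rw [transl_apply, transl_apply, map_add, map_add, map_zero]; ring⟩

lemma translInv (lam : V) : (transl lam)⁻¹ = transl (-lam) := by
  have h : transl lam * transl (-lam) = 1 := by
    rw [transl_mul]; simp [transl_zero]
  exact inv_eq_of_mul_eq_one_right h

lemma intVec_neg {lam : V} (h : RS.IntVec lam) : RS.IntVec (-lam) := by
  intro β hβ
  obtain ⟨k, hk⟩ := h β hβ
  exact ⟨-k, by rw [map_neg, hk]; push_cast; ring⟩

lemma nice_transl {lam : V} (h : RS.IntVec lam) : RS.Nice (transl lam) := by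
  refine ⟨RS.nice0_transl h, ?_⟩
  rw [translInv]
  exact RS.nice0_transl (RS.intVec_neg h)

/-- single step of the order, reflection form -/
lemma stepRefl {P Φ' : Set (Module.Dual ℝ V)} {z : Equiv.Perm V} (hz : RS.Nice0 z)
    {γ : Module.Dual ℝ V} (hγr : γ ∈ RS.roots) (hγ' : γ ∈ Φ') {p c : ℤ}
    (hc : γ (z 0) + (p : ℝ) = (c : ℝ)) (hc1 : 1 ≤ c) :
    RS.stepRel P Φ' (RS.sAff γ p * z) z := by
  obtain ⟨⟨k, hk⟩, β, hβ, hf⟩ := hz γ hγr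
  refine ⟨γ, ⟨hγr, hγ'⟩, p, rfl, β, hβ, c, ?_, Or.inl (by exact_mod_cast hc1)⟩
  funext v
  show γ (z v) + (p : ℝ) = β v + (c : ℝ)
  rw [hf v, ← hc]
  ring

end RootSystemData
end Infra5

section Infra6
set_option linter.unusedSectionVars false
set_option linter.unusedVariables false
set_option maxHeartbeats 1000000
open Module

variable {V : Type*} [AddCommGroup V] [Module ℝ V] [FiniteDimensional ℝ V]
variable (RS : RootSystemData V)

namespace RootSystemData

lemma sAff_comp_sAff {γ : Module.Dual ℝ V} (hγ : γ ∈ RS.roots) (n₂ n₁ : ℤ) (x : V) :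
    RS.sAff γ n₂ (RS.sAff γ n₁ x) = x - ((n₂ : ℝ) - (n₁ : ℝ)) • RS.coroot γ := by
  rw [RS.sAff_apply hγ, RS.sAff_apply hγ]
  have h2 : γ (RS.coroot γ) = 2 := RS.root_coroot_two γ hγ
  simp only [map_sub, map_smul, smul_eq_mul, h2]
  module

/-- two-step descent: translation by -k coroot, k ≥ 2 -/
lemma lineTrans {P Φ' : Set (Module.Dual ℝ V)} {z : Equiv.Perm V} (hz : RS.Nice0 z)
    {γ : Module.Dual ℝ V} (hγr : γ ∈ RS.roots) (hγ' : γ ∈ Φ') {k : ℤ} (hk : 2 ≤ k) :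
    Relation.ReflTransGen (RS.stepRel P Φ') (transl (-((k : ℝ) • RS.coroot γ)) * z) z := by
  obtain ⟨⟨k₀, hk₀⟩, _⟩ := hz γ hγr
  set n₁ : ℤ := 1 - k₀ with hn₁
  have step1 : RS.stepRel P Φ' (RS.sAff γ n₁ * z) z := by
    refine RS.stepRefl hz hγr hγ' (c := 1) ?_ le_rfl
    rw [hk₀]; push_cast [hn₁]; ring
  set z₁ := RS.sAff γ n₁ * z with hz₁
  have hnz₁ : RS.Nice0 z₁ := RS.nice0_mul (RS.nice0_sAff hγr n₁) hz
  have hz₁0 : γ (z₁ 0) = ((k₀ - 2 : ℤ) : ℝ) := by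
    rw [hz₁]
    show γ (RS.sAff γ n₁ (z 0)) = _
    rw [RS.sAff_apply_val hγr]
    unfold rd
    simp only [LinearMap.sub_apply, LinearMap.smul_apply, smul_eq_mul]
    rw [RS.root_coroot_two γ hγr, hk₀]
    push_cast [hn₁]; ring
  set n₂ : ℤ := k + 1 - k₀ with hn₂
  have step2 : RS.stepRel P Φ' (RS.sAff γ n₂ * z₁) z₁ := by
    refine RS.stepRefl hnz₁ hγr hγ' (c := k - 1) ?_ (by omega)
    rw [hz₁0]; push_cast [hn₂]; ring
  have hfinal : RS.sAff γ n₂ * z₁ = transl (-((k : ℝ) • RS.coroot γ)) * z := by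
    ext x
    simp only [Equiv.Perm.mul_apply, hz₁]
    rw [RS.sAff_comp_sAff hγr, transl_apply]
    push_cast [hn₁, hn₂]
    module
  rw [← hfinal]
  exact Relation.ReflTransGen.head step2 (Relation.ReflTransGen.single step1)

/-- left translation preserves steps -/
lemma step_transl {P Φ' : Set (Module.Dual ℝ V)} {lam : V} (hlam : RS.IntVec lam)
    {x y : Equiv.Perm V} (h : RS.stepRel P Φ' x y) :
    RS.stepRel P Φ' (transl lam * x) (transl lam * y) := by
  obtain ⟨γ, hγ, n, rfl, hpos⟩ := h
  obtain ⟨k, hk⟩ := hlam γ hγ.1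
  refine ⟨γ, hγ, n - k, ?_, ?_⟩
  · ext v
    simp only [Equiv.Perm.mul_apply, transl_apply]
    rw [RS.sAff_apply hγ.1, RS.sAff_apply hγ.1, map_add, hk]
    push_cast
    module
  · obtain ⟨β, hβ, c, hfc, hcpos⟩ := hpos
    refine ⟨β, hβ, c, ?_, hcpos⟩
    funext v
    have := congrFun hfc v
    simp only [aev] at this ⊢
    simp only [Equiv.Perm.mul_apply, transl_apply, map_add, hk]
    push_cast
    push_cast at this
    linarith [this]

lemma chain_transl {P Φ' : Set (Module.Dual ℝ V)} {lam : V} (hlam : RS.IntVec lam)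
    {x y : Equiv.Perm V} (h : Relation.ReflTransGen (RS.stepRel P Φ') x y) :
    Relation.ReflTransGen (RS.stepRel P Φ') (transl lam * x) (transl lam * y) :=
  Relation.ReflTransGen.lift (fun z => transl lam * z)
    (fun _ _ hs => RS.step_transl hlam hs) _ _ h

lemma step_mono {P Φ₁ Φ₂ : Set (Module.Dual ℝ V)} (hsub : Φ₁ ⊆ Φ₂)
    {x y : Equiv.Perm V} (h : RS.stepRel P Φ₁ x y) : RS.stepRel P Φ₂ x y := by
  obtain ⟨γ, hγ, n, rfl, hpos⟩ := h
  exact ⟨γ, ⟨hγ.1, hsub hγ.2⟩, n, rfl, hpos⟩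

lemma ordLE_to_chain {P Φ' : Set (Module.Dual ℝ V)} {x y : Equiv.Perm V}
    (h : RS.ordLE P Φ' x y) : Relation.ReflTransGen (RS.stepRel P Φ') x y := by
  rcases h with rfl | h
  · exact Relation.ReflTransGen.refl
  · exact h.to_reflTransGen

lemma chain_to_ordLE {P Φ' : Set (Module.Dual ℝ V)} {x y : Equiv.Perm V}
    (h : Relation.ReflTransGen (RS.stepRel P Φ') x y) : RS.ordLE P Φ' x y := by
  rcases (Relation.reflTransGen_iff_eq_or_transGen.1 h) with h' | h'
  · exact Or.inl h'.symm
  · exact Or.inr h'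

/-- step constant extraction: each step drops π by a nonneg multiple of the coroot -/
lemma extract {P : Set (Module.Dual ℝ V)} {γ : Module.Dual ℝ V} (hγ : γ ∈ RS.roots)
    {x y : Equiv.Perm V} (hy : RS.Nice0 y) (h : RS.ordLE P {γ} x y) :
    ∃ t : ℤ, 0 ≤ t ∧ RS.Nice0 x ∧ x 0 = y 0 - (t : ℝ) • RS.coroot γ ∧
      ((∀ v, x v = y v - (t : ℝ) • RS.coroot γ)
        ∨ (∃ p : ℤ, (∀ v, x v = RS.sAff γ p (y v)) ∧ γ (y 0) + (p : ℝ) = (t : ℝ))) := by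
  have hchain := RS.ordLE_to_chain h
  clear h
  induction hchain using Relation.ReflTransGen.head_induction_on with
  | refl =>
    exact ⟨0, le_rfl, hy, by simp, Or.inl (fun v => by simp)⟩
  | @head a a' hstep htail ih =>
    obtain ⟨t, ht0, hna', h0', hform⟩ := ih
    obtain ⟨γ', hγ'mem, n, hae, hpos⟩ := hstep
    have hγeq : γ' = γ := hγ'mem.2
    rw [hγeq] at hae hpos
    obtain ⟨β, hβ, c, hfc, hcpos⟩ := hpos
    have hc0 : γ (a' 0) + (n : ℝ) = (c : ℝ) := by
      have := congrFun hfc 0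
      simp only [aev, map_zero] at this
      linarith [this]
    have hcnn : (0 : ℤ) ≤ c := by
      rcases hcpos with h1 | h1
      · omega
      · omega
    have hna : RS.Nice0 a := by
      rw [hae]; exact RS.nice0_mul (RS.nice0_sAff hγ n) hna'
    have ha'0 : γ (a' 0) = γ (y 0) - (t : ℝ) * 2 := by
      rw [h0', map_sub, map_smul, smul_eq_mul, RS.root_coroot_two γ hγ]
    have ha0 : a 0 = y 0 - ((c + t : ℤ) : ℝ) • RS.coroot γ := by
      have h2 : γ (RS.coroot γ) = 2 := RS.root_coroot_two γ hγ
      rw [hae]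
      show RS.sAff γ n (a' 0) = _
      rw [RS.sAff_apply hγ, h0']
      have e : γ (y 0 - (t : ℝ) • RS.coroot γ) + (n : ℝ) = (c : ℝ) := by
        rw [map_sub, map_smul, smul_eq_mul, h2, ← ha'0]
        exact hc0
      rw [e]
      push_cast
      module
    refine ⟨c + t, by omega, hna, ha0, ?_⟩
    rcases hform with htr | ⟨p, href, hpt⟩
    · -- a' is translation below y; composing with reflection gives reflection form
      right
      refine ⟨n - t, fun v => ?_, ?_⟩
      · rw [hae]
        show RS.sAff γ n (a' v) = _
        rw [htr v, RS.sAff_apply hγ, RS.sAff_apply hγ]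
        have h2 : γ (RS.coroot γ) = 2 := RS.root_coroot_two γ hγ
        simp only [map_sub, map_smul, smul_eq_mul, h2]
        push_cast
        module
      · push_cast
        linarith [hc0, ha'0]
    · -- a' is reflection below y; composing gives translation form
      left
      intro v
      rw [hae]
      show RS.sAff γ n (a' v) = _
      rw [href v, RS.sAff_comp_sAff hγ]
      have : (n : ℝ) - (p : ℝ) = ((c + t : ℤ) : ℝ) := by
        push_cast
        linarith [hc0, hpt, ha'0]
      rw [this]

end RootSystemData
end Infra6

section Infra7
set_option linter.unusedSectionVars false
set_option linter.unusedVariables false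
set_option maxHeartbeats 1000000
open Module

variable {V : Type*} [AddCommGroup V] [Module ℝ V] [FiniteDimensional ℝ V]
variable (RS : RootSystemData V)

lemma simplesOf_image {V : Type*} [AddCommGroup V] [Module ℝ V]
    {g : Module.Dual ℝ V → Module.Dual ℝ V}
    (hadd : ∀ x y, g (x + y) = g x + g y) (hinj : Function.Injective g)
    (P : Set (Module.Dual ℝ V)) : g '' simplesOf P = simplesOf (g '' P) := by
  ext α'
  constructor
  · rintro ⟨α, ⟨hαP, hαn⟩, rfl⟩
    refine ⟨⟨α, hαP, rfl⟩, ?_⟩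
    rintro ⟨β', ⟨β, hβ, rfl⟩, γ', ⟨γ, hγ, rfl⟩, hdec⟩
    rw [← hadd] at hdec
    exact hαn ⟨β, hβ, γ, hγ, hinj hdec⟩
  · rintro ⟨⟨α, hαP, rfl⟩, hn⟩
    refine ⟨α, ⟨hαP, ?_⟩, rfl⟩
    rintro ⟨β, hβ, γ, hγ, hdec⟩
    exact hn ⟨g β, ⟨β, hβ, rfl⟩, g γ, ⟨γ, hγ, rfl⟩, by rw [hdec, hadd]⟩

namespace RootSystemData

lemma phiZero_subsys (ψv : V) : RS.SubSys (RS.phiZero ψv) := by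
  constructor
  · intro α hα; exact hα.1
  · rintro α ⟨hα, hα0⟩ δ ⟨hδ, hδ0⟩
    refine ⟨RS.reflect_mem δ hδ α hα, ?_⟩
    simp only [LinearMap.sub_apply, LinearMap.smul_apply, smul_eq_mul, hα0, hδ0]
    ring

lemma coroot_add_span {β γ : Module.Dual ℝ V} (hβ : β ∈ RS.roots) (hγ : γ ∈ RS.roots)
    (hsum : β + γ ∈ RS.roots) :
    ∃ c₁ c₂ : ℝ, RS.coroot (β + γ) = c₁ • RS.coroot β + c₂ • RS.coroot γ := by
  have hA : 0 < RS.Bf (RS.coroot β) (RS.coroot β) :=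
    RS.Bf_cc_pos hβ (RS.corootDatum_coroot hβ)
  have hB : 0 < RS.Bf (RS.coroot γ) (RS.coroot γ) :=
    RS.Bf_cc_pos hγ (RS.corootDatum_coroot hγ)
  refine ⟨RS.Bf (RS.coroot (β+γ)) (RS.coroot (β+γ)) / RS.Bf (RS.coroot β) (RS.coroot β),
    RS.Bf (RS.coroot (β+γ)) (RS.coroot (β+γ)) / RS.Bf (RS.coroot γ) (RS.coroot γ), ?_⟩
  have hz : ∀ y, RS.Bf (RS.coroot (β+γ)
      - ((RS.Bf (RS.coroot (β+γ)) (RS.coroot (β+γ)) / RS.Bf (RS.coroot β) (RS.coroot β))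
          • RS.coroot β
        + (RS.Bf (RS.coroot (β+γ)) (RS.coroot (β+γ)) / RS.Bf (RS.coroot γ) (RS.coroot γ))
          • RS.coroot γ)) y = 0 := by
    intro y
    rw [RS.Bf_sub_left, RS.Bf_add_left, RS.Bf_smul_left, RS.Bf_smul_left]
    have h1 := RS.Bf_coroot_pairing (RS.corootDatum_coroot hβ) y
    have h2 := RS.Bf_coroot_pairing (RS.corootDatum_coroot hγ) y
    have h3 := RS.Bf_coroot_pairing (RS.corootDatum_coroot hsum) y
    have h4 : (β + γ) y = β y + γ y := rfl
    rw [h4] at h3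
    have e1 : RS.Bf (RS.coroot β) y
        = RS.Bf (RS.coroot β) (RS.coroot β) * β y / 2 := by linarith
    have e2 : RS.Bf (RS.coroot γ) y
        = RS.Bf (RS.coroot γ) (RS.coroot γ) * γ y / 2 := by linarith
    have e3 : RS.Bf (RS.coroot (β+γ)) y
        = RS.Bf (RS.coroot (β+γ)) (RS.coroot (β+γ)) * (β y + γ y) / 2 := by linarith
    rw [e1, e2, e3]
    field_simp
    ring
  have := RS.Bf_self_eq_zero (hz _)
  rw [sub_eq_zero] at this
  exact this

/-- base-point data for a ψ-chamber, in terms of a regular vector -/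
def FP (ψ : Module.Dual ℝ V) (ψv : V) (v : V) : Prop :=
  RS.IsRegularPt v ∧ ∃ α₀ ∈ simplesOf (RSPS RS.roots v),
    (∀ β ∈ simplesOf (RSPS RS.roots v), ψ (RS.coroot β) = if β = α₀ then 1 else 0) ∧
    (∀ β ∈ simplesOf (RSPS RS.roots v), β ψv = if β = α₀ then 1 else 0)

/-- ψ vanishes on coroots of roots orthogonal to ψv -/
lemma psi_orth {ψ : Module.Dual ℝ V} {ψv : V} {v₀ : V} (hFP : RS.FP ψ ψv v₀) :
    ∀ γ ∈ RS.roots, γ ψv = 0 → ψ (RS.coroot γ) = 0 := by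
  obtain ⟨hv₀, α₀, hα₀, hP, hC⟩ := hFP
  have key : ∀ γ ∈ RSPS RS.roots v₀, 0 ≤ γ ψv ∧ (γ ψv = 0 → ψ (RS.coroot γ) = 0) := by
    refine RS.ps_induction (le_refl RS.roots) v₀
      (Q := fun γ => 0 ≤ γ ψv ∧ (γ ψv = 0 → ψ (RS.coroot γ) = 0)) ?_ ?_
    · intro τ hτ
      constructor
      · rw [hC τ hτ]
        by_cases h : τ = α₀ <;> simp [h]
      · intro h0
        rw [hP τ hτ]
        rw [hC τ hτ] at h0
        by_cases h : τ = α₀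
        · rw [if_pos h] at h0; norm_num at h0
        · rw [if_neg h]
    · intro β γ hβ hγ hQβ hQγ hsum
      constructor
      · have : (β + γ) ψv = β ψv + γ ψv := rfl
        rw [this]
        linarith [hQβ.1, hQγ.1]
      · intro h0
        have hval : β ψv + γ ψv = 0 := h0
        have hβ0 : β ψv = 0 := by linarith [hQβ.1, hQγ.1]
        have hγ0 : γ ψv = 0 := by linarith [hQβ.1, hQγ.1]
        obtain ⟨c₁, c₂, hc⟩ := RS.coroot_add_span hβ.1 hγ.1 hsum.1
        rw [hc, map_add, map_smul, map_smul, smul_eq_mul, smul_eq_mul,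
          hQβ.2 hβ0, hQγ.2 hγ0]
        ring
  intro γ hγr hγ0
  rcases lt_or_gt_of_ne (hv₀ γ hγr) with hneg | hpos
  · have hmem : -γ ∈ RSPS RS.roots v₀ := ⟨RS.neg_mem hγr, by
      simp only [LinearMap.neg_apply]; linarith⟩
    have h := (key _ hmem).2 (by simp only [LinearMap.neg_apply, hγ0, neg_zero])
    rw [RS.coroot_neg hγr, map_neg] at h
    linarith
  · exact (key γ ⟨hγr, hpos⟩).2 hγ0

lemma rd_add {δ : Module.Dual ℝ V} (x y : Module.Dual ℝ V) :
    RS.rd δ (x + y) = RS.rd δ x + RS.rd δ y := by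
  unfold rd
  simp only [LinearMap.add_apply]
  module

lemma rd_inj {δ : Module.Dual ℝ V} (hδ : δ ∈ RS.roots) :
    Function.Injective (RS.rd δ) := by
  intro x y h
  have := congrArg (RS.rd δ) h
  rwa [RS.rd_invol hδ, RS.rd_invol hδ] at this

/-- positive set of the reflected regular point, full system -/
lemma ps_image_rd {δ : Module.Dual ℝ V} (hδ : δ ∈ RS.roots) (v : V) :
    RSPS RS.roots (RS.sAff δ 0 v) = RS.rd δ '' (RSPS RS.roots v) := by
  ext α
  constructor
  · rintro ⟨hα, hpos⟩
    refine ⟨RS.rd δ α, ⟨RS.rd_mem_roots hδ hα, ?_⟩, RS.rd_invol hδ α⟩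
    rw [← RS.rd_apply_sAff hδ]
    exact hpos
  · rintro ⟨β, ⟨hβ, hβv⟩, rfl⟩
    refine ⟨RS.rd_mem_roots hδ hβ, ?_⟩
    rw [RS.rd_apply_sAff hδ, RS.rd_invol hδ]
    exact hβv

end RootSystemData
end Infra7

section Infra7b
set_option linter.unusedSectionVars false
set_option linter.unusedVariables false
set_option maxHeartbeats 1000000
open Module

variable {V : Type*} [AddCommGroup V] [Module ℝ V] [FiniteDimensional ℝ V]
variable (RS : RootSystemData V)

namespace RootSystemData

lemma simples_CH {v : V} (hv : RS.IsRegularPt v) :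
    RS.simples (RS.CH v) = simplesOf (RSPS RS.roots v) := by
  unfold simples
  rw [RS.pos_CH hv]

lemma fundpair_to_FP {ψ : Module.Dual ℝ V} {ψv : V} {D : Set V} (hD : RS.IsChamber D)
    (hFund : RS.IsFundPair D ψ ψv) :
    ∃ v, RS.IsRegularPt v ∧ D = RS.CH v ∧ RS.FP ψ ψv v := by
  obtain ⟨v, hv, rfl⟩ := hD
  refine ⟨v, hv, rfl, hv, ?_⟩
  obtain ⟨α₀, ⟨hα₀s, hP⟩, ⟨_, hC⟩⟩ := hFund
  have he : RS.simples {x | ∀ α ∈ RS.roots, 0 < α v → 0 < α x}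
      = simplesOf (RSPS RS.roots v) := RS.simples_CH hv
  rw [he] at hα₀s hP hC
  exact ⟨α₀, hα₀s, hP, hC⟩

lemma FP_to_fundpair {ψ : Module.Dual ℝ V} {ψv : V} {v : V} (h : RS.FP ψ ψv v) :
    RS.IsFundPair (RS.CH v) ψ ψv := by
  obtain ⟨hv, α₀, hα₀, hP, hC⟩ := h
  refine ⟨α₀, ⟨?_, ?_⟩, ⟨?_, ?_⟩⟩ <;> rw [RS.simples_CH hv]
  · exact hα₀
  · exact hP
  · exact hα₀
  · exact hC

lemma FP_reflect {ψ : Module.Dual ℝ V} {ψv : V} {v : V} (h : RS.FP ψ ψv v)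
    {δ : Module.Dual ℝ V} (hδ : δ ∈ simplesOf (RSPS (RS.phiZero ψv) v)) :
    RS.FP ψ ψv (RS.sAff δ 0 v) := by
  have horth := RS.psi_orth h
  obtain ⟨hv, α₀, hα₀, hP, hC⟩ := h
  have hδΦψ : δ ∈ RS.phiZero ψv := hδ.1.1
  have hδr : δ ∈ RS.roots := hδΦψ.1
  have hδ0 : δ ψv = 0 := hδΦψ.2
  have hψδ : ψ (RS.coroot δ) = 0 := horth δ hδr hδ0
  have hsimp_eq : simplesOf (RSPS RS.roots (RS.sAff δ 0 v))
      = RS.rd δ '' simplesOf (RSPS RS.roots v) := by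
    rw [RS.ps_image_rd hδr, ← simplesOf_image (RS.rd_add) (RS.rd_inj hδr)]
  have hval1 : ∀ β, β ∈ RS.roots → ψ (RS.coroot (RS.rd δ β)) = ψ (RS.coroot β) := by
    intro β hβr
    show ψ (RS.coroot (β - β (RS.coroot δ) • δ)) = _
    rw [RS.coroot_reflect hβr hδr]
    rw [map_sub, map_smul, smul_eq_mul, hψδ]
    ring
  have hval2 : ∀ β, (RS.rd δ β) ψv = β ψv := by
    intro β
    show (β - β (RS.coroot δ) • δ) ψv = _
    simp only [LinearMap.sub_apply, LinearMap.smul_apply, smul_eq_mul, hδ0]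
    ring
  have hite : ∀ β : Module.Dual ℝ V,
      (if RS.rd δ β = RS.rd δ α₀ then (1:ℝ) else 0) = (if β = α₀ then 1 else 0) := by
    intro β
    by_cases h : β = α₀
    · rw [if_pos h, if_pos (by rw [h])]
    · rw [if_neg h, if_neg (fun hc => h (RS.rd_inj hδr hc))]
  refine ⟨RS.regular_sAff hδr hv, RS.rd δ α₀, ?_, ?_, ?_⟩
  · rw [hsimp_eq]; exact ⟨α₀, hα₀, rfl⟩
  · intro β' hβ'
    rw [hsimp_eq] at hβ'
    obtain ⟨β, hβ, rfl⟩ := hβ'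
    rw [hval1 β hβ.1.1, hP β hβ, ← hite β]
  · intro β' hβ'
    rw [hsimp_eq] at hβ'
    obtain ⟨β, hβ, rfl⟩ := hβ'
    rw [hval2 β, hC β hβ, ← hite β]

end RootSystemData
end Infra7b

section Infra7c
set_option linter.unusedSectionVars false
set_option linter.unusedVariables false
set_option maxHeartbeats 1000000
open Module

variable {V : Type*} [AddCommGroup V] [Module ℝ V] [FiniteDimensional ℝ V]
variable (RS : RootSystemData V)

namespace RootSystemData

lemma matched_exists {ψ : Module.Dual ℝ V} {ψv : V} {v₀ : V} (h₀ : RS.FP ψ ψv v₀)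
    {vC : V} (hvC : RS.IsRegularPt vC) :
    ∃ v, RS.FP ψ ψv v ∧ RSPS (RS.phiZero ψv) v = RSPS (RS.phiZero ψv) vC := by
  set Φψ := RS.phiZero ψv with hΦψ
  have hsub : Φψ ⊆ RS.roots := fun α hα => hα.1
  have hS : RS.SubSys Φψ := RS.phiZero_subsys ψv
  set T := RSPS Φψ vC with hT
  suffices H : ∀ n, ∀ v, RS.FP ψ ψv v → (RSPS Φψ v \ T).ncard = n →
      ∃ v', RS.FP ψ ψv v' ∧ RSPS Φψ v' = T by
    exact H _ v₀ h₀ rfl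
  intro n
  induction n using Nat.strong_induction_on with
  | _ n ih =>
    intro v hFP hcard
    by_cases heq : RSPS Φψ v = T
    · exact ⟨v, hFP, heq⟩
    -- find a simple root of the Φψ-positive set at v that is not in T
    have hv : RS.IsRegularPt v := hFP.1
    have hexδ : ∃ δ ∈ simplesOf (RSPS Φψ v), δ ∉ T := by
      by_contra hc
      push_neg at hc
      have hQT : ∀ α ∈ RSPS Φψ v, α ∈ T := by
        refine RS.ps_induction hsub v (Q := fun α => α ∈ T) hc ?_
        intro β γ hβ hγ hQβ hQγ hsum
        exact ⟨hsum.1, by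
          have : (β + γ) vC = β vC + γ vC := rfl
          rw [this]
          exact add_pos hQβ.2 hQγ.2⟩
      apply heq
      apply Set.eq_of_subset_of_subset hQT
      intro α hα
      by_contra hc2
      have hαv : α v ≠ 0 := hv α (hsub hα.1)
      have hαvneg : α v < 0 := by
        rcases lt_or_gt_of_ne hαv with h | h
        · exact h
        · exact absurd ⟨hα.1, h⟩ hc2
      have hnege : -α ∈ RSPS Φψ v := ⟨RS.subsys_neg hS hα.1, by
        simp only [LinearMap.neg_apply]; linarith⟩
      have := (hQT _ hnege).2
      simp only [LinearMap.neg_apply] at this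
      have := hα.2
      linarith
    obtain ⟨δ, hδs, hδT⟩ := hexδ
    have hδΦψ : δ ∈ Φψ := hδs.1.1
    have hδr : δ ∈ RS.roots := hsub hδΦψ
    -- cross the wall
    have hFP' : RS.FP ψ ψv (RS.sAff δ 0 v) := RS.FP_reflect hFP hδs
    have hps' : RSPS Φψ (RS.sAff δ 0 v) = (RSPS Φψ v \ {δ}) ∪ {-δ} :=
      RS.ps_reflect hS hv hδs
    have hnδT : -δ ∈ T := by
      have hδvC : δ vC ≠ 0 := hvC δ hδr
      have : δ vC < 0 := by
        rcases lt_or_gt_of_ne hδvC with h | h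
        · exact h
        · exact absurd ⟨hδΦψ, h⟩ hδT
      exact ⟨RS.subsys_neg hS hδΦψ, by simp only [LinearMap.neg_apply]; linarith⟩
    have hdiff : RSPS Φψ (RS.sAff δ 0 v) \ T = (RSPS Φψ v \ T) \ {δ} := by
      rw [hps']
      ext α
      simp only [Set.mem_diff, Set.mem_union, Set.mem_singleton_iff]
      constructor
      · rintro ⟨h1 | h1, h2⟩
        · exact ⟨⟨h1.1, h2⟩, h1.2⟩
        · exact absurd (h1 ▸ hnδT) h2
      · rintro ⟨⟨h1, h2⟩, h3⟩
        exact ⟨Or.inl ⟨h1, h3⟩, h2⟩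
    have hfin : (RSPS Φψ v \ T).Finite :=
      RS.finite.subset (fun α hα => hsub hα.1.1)
    have hδmem : δ ∈ RSPS Φψ v \ T := ⟨hδs.1, hδT⟩
    have hlt : ((RSPS Φψ v \ T) \ {δ}).ncard < (RSPS Φψ v \ T).ncard := by
      apply Set.ncard_lt_ncard _ hfin
      constructor
      · exact Set.diff_subset
      · intro hsub2
        have := hsub2 hδmem
        simp at this
    rw [hcard] at hlt
    exact ih _ (by rw [← hdiff] at hlt; exact hlt) _ hFP' (by rw [hdiff])
end RootSystemData
end Infra7c

section Infra8a
set_option linter.unusedSectionVars false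
set_option linter.unusedVariables false
set_option maxHeartbeats 1000000
open Module

variable {V : Type*} [AddCommGroup V] [Module ℝ V] [FiniteDimensional ℝ V]
variable (RS : RootSystemData V)

namespace RootSystemData

lemma down_trans {P Φ' : Set (Module.Dual ℝ V)} {Z X : Equiv.Perm V} (hZ : RS.Nice0 Z)
    {γ : Module.Dual ℝ V} (hγr : γ ∈ RS.roots) (hγ' : γ ∈ Φ') {k : ℤ} (hk : 2 ≤ k)
    (hXZ : ∀ v, X v = Z v - (k : ℝ) • RS.coroot γ) :
    Relation.ReflTransGen (RS.stepRel P Φ') X Z := by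
  have hX : X = transl (-((k : ℝ) • RS.coroot γ)) * Z := by
    ext v
    rw [hXZ v]
    show _ = -((k : ℝ) • RS.coroot γ) + Z v
    module
  rw [hX]
  exact RS.lineTrans hZ hγr hγ' hk

lemma down_refl {P Φ' : Set (Module.Dual ℝ V)} {Z X : Equiv.Perm V} (hZ : RS.Nice0 Z)
    {γ : Module.Dual ℝ V} (hγr : γ ∈ RS.roots) (hγ' : γ ∈ Φ') {q c : ℤ}
    (hc : γ (Z 0) + (q : ℝ) = (c : ℝ)) (hc1 : 1 ≤ c)
    (hXZ : ∀ v, X v = RS.sAff γ q (Z v)) :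
    Relation.ReflTransGen (RS.stepRel P Φ') X Z := by
  have hX : X = RS.sAff γ q * Z := by
    ext v; exact hXZ v
  rw [hX]
  exact Relation.ReflTransGen.single (RS.stepRefl hZ hγr hγ' hc hc1)

/-- dichotomy: equal positive sets from empty difference -/
lemma ps_eq_of_diff_empty {v w : V} (hv : RS.IsRegularPt v) (hw : RS.IsRegularPt w)
    (h : RSPS RS.roots v \ RSPS RS.roots w = ∅) :
    RSPS RS.roots v = RSPS RS.roots w := by
  have hsub : RSPS RS.roots v ⊆ RSPS RS.roots w := by
    intro α hα
    by_contra hc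
    exact absurd (Set.mem_of_mem_of_subset (show α ∈ _ \ _ from ⟨hα, hc⟩) (h ▸ le_rfl))
      (Set.notMem_empty α)
  apply Set.eq_of_subset_of_subset hsub
  intro α hα
  rcases lt_or_gt_of_ne (hv α hα.1) with hneg | hpos
  · exfalso
    have hmem : -α ∈ RSPS RS.roots v := ⟨RS.neg_mem hα.1, by
      simp only [LinearMap.neg_apply]; linarith⟩
    have := (hsub hmem).2
    simp only [LinearMap.neg_apply] at this
    have := hα.2
    linarith
  · exact ⟨hα.1, hpos⟩

lemma pos_of_eqCH {E : RS.ChamberT} {v : V} (hv : RS.IsRegularPt v)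
    (hE : E.1 = RS.CH v) : RS.pos E.1 = RSPS RS.roots v := by
  rw [hE, RS.pos_CH hv]

lemma simples_of_eqCH {E : RS.ChamberT} {v : V} (hv : RS.IsRegularPt v)
    (hE : E.1 = RS.CH v) : RS.simples E.1 = simplesOf (RSPS RS.roots v) := by
  rw [hE, RS.simples_CH hv]

end RootSystemData
end Infra8a

section Infra8b
set_option linter.unusedSectionVars false
set_option linter.unusedVariables false
set_option maxHeartbeats 4000000
open Module

variable {V : Type*} [AddCommGroup V] [Module ℝ V] [FiniteDimensional ℝ V]
variable (RS : RootSystemData V)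

namespace RootSystemData

lemma main_ind (C₀ : Set V)
    (u w : RS.ChamberT → Equiv.Perm V) (μ : V)
    (huN : ∀ C, RS.Nice (u C)) (hwN : ∀ C, RS.Nice (w C))
    (hμint : RS.IntVec μ)
    (hadmU : RS.AdmissibleW C₀ u) (hadmW : RS.AdmissibleW C₀ w)
    (N : ℤ) (hN2 : 2 ≤ N)
    (hreg : RS.RegularWAt ((N : ℝ) + 2) w)
    (hbound : ∀ E E' : RS.ChamberT, ∀ γ ∈ RS.roots,
      γ (piL (u E)) - γ (piL (u E')) ≤ 2 * ((N : ℝ) - 2))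
    {vC vD : V} (hvC : RS.IsRegularPt vC) (hvD : RS.IsRegularPt vD)
    (D : RS.ChamberT) (hD : D.1 = RS.CH vD) :
    ∀ n : ℕ, ∀ (E : RS.ChamberT) (vE : V), RS.IsRegularPt vE → E.1 = RS.CH vE →
      (RSPS RS.roots vE \ RSPS RS.roots vD).ncard = n →
      (RSPS RS.roots vE \ RSPS RS.roots vD) ⊆ RSPS RS.roots vC →
      ∃ η : V, RS.IntVec η ∧
        Relation.ReflTransGen (RS.stepRel (RS.pos C₀) (RSPS RS.roots vC))
          (transl η * w D) (w E) ∧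
        Relation.ReflTransGen (RS.stepRel (RS.pos C₀) (RSPS RS.roots vC))
          (transl μ * u E) (transl η * (transl μ * u D)) := by
  intro n
  induction n using Nat.strong_induction_on with
  | _ n ih =>
    intro E vE hvE hE hcard hsubC
    by_cases h0 : RSPS RS.roots vE \ RSPS RS.roots vD = ∅
    · -- base: E = D
      have hps := RS.ps_eq_of_diff_empty hvE hvD h0
      have hED : E = D := Subtype.ext (by rw [hE, hD, RS.CH_eq_of_ps_eq hps])
      subst hED
      refine ⟨0, RS.intVec_zero, ?_, ?_⟩
      · rw [transl_zero, one_mul]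
      · rw [transl_zero, one_mul]
    · -- inductive step
      have hexδ : ∃ δ ∈ simplesOf (RSPS RS.roots vE), δ ∉ RSPS RS.roots vD := by
        by_contra hc
        push_neg at hc
        have hQT : ∀ α ∈ RSPS RS.roots vE, α ∈ RSPS RS.roots vD := by
          refine RS.ps_induction (le_refl _) vE
            (Q := fun α => α ∈ RSPS RS.roots vD) hc ?_
          intro β γ hβ hγ hQβ hQγ hsum
          exact ⟨hsum.1, by
            have he : (β + γ) vD = β vD + γ vD := rfl
            rw [he]; exact add_pos hQβ.2 hQγ.2⟩
        exact h0 (Set.diff_eq_empty.2 hQT)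
      obtain ⟨δ, hδs, hδD⟩ := hexδ
      have hδr : δ ∈ RS.roots := hδs.1.1
      have hδC : δ ∈ RSPS RS.roots vC := hsubC ⟨hδs.1, hδD⟩
      have hvE₁ : RS.IsRegularPt (RS.sAff δ 0 vE) := RS.regular_sAff hδr hvE
      set E₁ : RS.ChamberT := ⟨RS.CH (RS.sAff δ 0 vE), RS.CH_isChamber hvE₁⟩ with hE₁def
      have hE₁ : E₁.1 = RS.CH (RS.sAff δ 0 vE) := rfl
      have hps1 : RSPS RS.roots (RS.sAff δ 0 vE) = (RSPS RS.roots vE \ {δ}) ∪ {-δ} :=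
        RS.ps_reflect RS.subsys_roots hvE hδs
      have hnδD : -δ ∈ RSPS RS.roots vD := by
        have hδvD : δ vD ≠ 0 := hvD δ hδr
        have : δ vD < 0 := by
          rcases lt_or_gt_of_ne hδvD with h | h
          · exact h
          · exact absurd ⟨hδr, h⟩ hδD
        exact ⟨RS.neg_mem hδr, by simp only [LinearMap.neg_apply]; linarith⟩
      have hdiff1 : RSPS RS.roots (RS.sAff δ 0 vE) \ RSPS RS.roots vD
          = (RSPS RS.roots vE \ RSPS RS.roots vD) \ {δ} := by
        rw [hps1]
        ext α
        simp only [Set.mem_diff, Set.mem_union, Set.mem_singleton_iff]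
        constructor
        · rintro ⟨h1 | h1, h2⟩
          · exact ⟨⟨h1.1, h2⟩, h1.2⟩
          · exact absurd (h1 ▸ hnδD) h2
        · rintro ⟨⟨h1, h2⟩, h3⟩
          exact ⟨Or.inl ⟨h1, h3⟩, h2⟩
      have hfin : (RSPS RS.roots vE \ RSPS RS.roots vD).Finite :=
        RS.finite.subset (fun α hα => hα.1.1)
      have hδdiff : δ ∈ RSPS RS.roots vE \ RSPS RS.roots vD := ⟨hδs.1, hδD⟩
      have hlt : ((RSPS RS.roots vE \ RSPS RS.roots vD) \ {δ}).ncard < n := by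
        rw [← hcard]
        apply Set.ncard_lt_ncard _ hfin
        constructor
        · exact Set.diff_subset
        · intro hsub2
          have := hsub2 hδdiff
          simp at this
      have hsubC1 : RSPS RS.roots (RS.sAff δ 0 vE) \ RSPS RS.roots vD
          ⊆ RSPS RS.roots vC := by
        rw [hdiff1]
        exact subset_trans Set.diff_subset hsubC
      obtain ⟨η₁, hη₁int, htop1, hbot1⟩ :=
        ih _ hlt E₁ (RS.sAff δ 0 vE) hvE₁ hE₁ (by rw [hdiff1]) hsubC1
      -- admissibility across the wall
      have himg : E₁.1 = ⇑(RS.sAff δ 0) '' E.1 := by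
        rw [hE, RS.image_CH hδr vE]
      have hδsimp : δ ∈ RS.simples E.1 := by
        rw [RS.simples_of_eqCH hvE hE]; exact hδs
      have hordW := hadmW E δ hδsimp E₁ himg
      have hordU := hadmU E δ hδsimp E₁ himg
      obtain ⟨t, ht0, hnwE₁, hπw, hformW⟩ := RS.extract hδr (hwN E).1 hordW
      obtain ⟨s, hs0, hnuE₁, hπu, hformU⟩ := RS.extract hδr (huN E).1 hordU
      -- regularity: t ≥ N + 2
      have h2 : δ (RS.coroot δ) = 2 := RS.root_coroot_two δ hδr
      have hregE : ((N:ℝ)+2) ≤ δ (w E 0) :=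
        hreg E δ (by rw [RS.pos_of_eqCH hvE hE]; exact ⟨hδr, hδs.1.2⟩)
      have hregE₁ : ((N:ℝ)+2) ≤ -(δ (w E₁ 0)) := by
        have := hreg E₁ (-δ) (by
          rw [RS.pos_of_eqCH hvE₁ hE₁, hps1]; right; rfl)
        simpa [piL] using this
      have hδw : δ (w E₁ 0) = δ (w E 0) - 2*(t:ℝ) := by
        rw [hπw, map_sub, map_smul, smul_eq_mul, h2]; ring
      have htN : N + 2 ≤ t := by
        have : ((N + 2 : ℤ) : ℝ) ≤ (t : ℝ) := by push_cast; linarith [hregE, hregE₁, hδw]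
        exact_mod_cast this
      -- u-drop bound: s ≤ N - 2
      have hδu : δ (u E₁ 0) = δ (u E 0) - 2*(s:ℝ) := by
        rw [hπu, map_sub, map_smul, smul_eq_mul, h2]; ring
      have hsN : s ≤ N - 2 := by
        have hb := hbound E E₁ δ hδr
        have e1 : δ (piL (u E)) = δ (u E 0) := rfl
        have e2 : δ (piL (u E₁)) = δ (u E₁ 0) := rfl
        rw [e1, e2, hδu] at hb
        have : (s : ℝ) ≤ ((N - 2 : ℤ) : ℝ) := by push_cast; linarith
        exact_mod_cast this
      -- translation vector
      have hlamint : RS.IntVec ((N:ℝ) • RS.coroot δ) := RS.intVec_smul_coroot hδr N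
      -- TOP: from (transl lam * w E₁) down... chain (transl lam * w E₁) →* (w E)
      have htop2 : Relation.ReflTransGen (RS.stepRel (RS.pos C₀) (RSPS RS.roots vC))
          (transl ((N:ℝ) • RS.coroot δ) * w E₁) (w E) := by
        rcases hformW with htr | ⟨p, href, hpt⟩
        · refine RS.down_trans (hwN E).1 hδr hδC (k := t - N) (by omega) ?_
          intro v
          simp only [Equiv.Perm.mul_apply, transl_apply]
          rw [htr v]
          push_cast
          module
        · refine RS.down_refl (hwN E).1 hδr hδC (q := p - N) (c := t - N) ?_ (by omega) ?_
          · push_cast; linarith [hpt]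
          · intro v
            simp only [Equiv.Perm.mul_apply, transl_apply]
            rw [href v, RS.sAff_apply hδr, RS.sAff_apply hδr]
            push_cast
            module
      -- BOTTOM: chain (transl μ * u E) →* (transl lam * (transl μ * u E₁))
      have hnZ₂ : RS.Nice0 (transl ((N:ℝ) • RS.coroot δ) * (transl μ * u E₁)) :=
        RS.nice0_mul (RS.nice0_transl hlamint)
          (RS.nice0_mul (RS.nice0_transl hμint) (huN E₁).1)
      have hbot2 : Relation.ReflTransGen (RS.stepRel (RS.pos C₀) (RSPS RS.roots vC))
          (transl μ * u E) (transl ((N:ℝ) • RS.coroot δ) * (transl μ * u E₁)) := by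
        rcases hformU with htr | ⟨p, href, hpt⟩
        · refine RS.down_trans hnZ₂ hδr hδC (k := N - s) (by omega) ?_
          intro v
          simp only [Equiv.Perm.mul_apply, transl_apply]
          rw [htr v]
          push_cast
          module
        · obtain ⟨kμ, hkμ⟩ := hμint δ hδr
          refine RS.down_refl hnZ₂ hδr hδC (q := p - N - kμ) (c := N - s) ?_ (by omega) ?_
          · -- δ (Z₂ 0) + (p - N - kμ) = N - s
            have hz0 : δ ((transl ((N:ℝ) • RS.coroot δ) * (transl μ * u E₁)) 0)
                = 2*(N:ℝ) + δ μ + δ (u E₁ 0) := by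
              simp only [Equiv.Perm.mul_apply, transl_apply, map_add, map_smul, smul_eq_mul,
                h2]
              ring
            rw [hz0, hδu, hkμ]
            push_cast
            linarith [hpt]
          · intro v
            simp only [Equiv.Perm.mul_apply, transl_apply]
            rw [href v, RS.sAff_apply hδr, RS.sAff_apply hδr]
            simp only [map_add, map_smul, map_sub, smul_eq_mul, h2, hkμ]
            push_cast
            module
      -- assemble
      refine ⟨(N:ℝ) • RS.coroot δ + η₁, RS.intVec_add hlamint hη₁int, ?_, ?_⟩
      · have hlift := RS.chain_transl hlamint htop1
        rw [← mul_assoc, transl_mul] at hlift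
        exact hlift.trans htop2
      · have hlift := RS.chain_transl hlamint hbot1
        rw [show transl ((N:ℝ) • RS.coroot δ) * (transl η₁ * (transl μ * u D))
            = transl ((N:ℝ) • RS.coroot δ + η₁) * (transl μ * u D) by
          rw [← mul_assoc, transl_mul]] at hlift
        exact hbot2.trans hlift

end RootSystemData
end Infra8b

section Infra9
set_option linter.unusedSectionVars false
set_option linter.unusedVariables false
set_option maxHeartbeats 4000000
open Module

variable {V : Type*} [AddCommGroup V] [Module ℝ V] [FiniteDimensional ℝ V]
variable (RS : RootSystemData V)

namespace RootSystemData

lemma pos_inter_phiZero {ψv : V} {D : RS.ChamberT} {vD : V} (hvD : RS.IsRegularPt vD)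
    (hD : D.1 = RS.CH vD) :
    RS.pos D.1 ∩ RS.phiZero ψv = RSPS (RS.phiZero ψv) vD := by
  rw [RS.pos_of_eqCH hvD hD]
  ext α
  constructor
  · rintro ⟨⟨h1, h2⟩, h3⟩; exact ⟨h3, h2⟩
  · rintro ⟨h1, h2⟩; exact ⟨⟨h1.1, h2⟩, h1⟩

lemma psSub {ψv : V} (v : V) : RSPS (RS.phiZero ψv) v ⊆ RSPS RS.roots v :=
  fun α hα => ⟨hα.1.1, hα.2⟩

lemma chambers_finite : {C : Set V | RS.IsChamber C}.Finite := by
  apply Set.Finite.subset ((RS.finite.finite_subsets).image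
    (fun P => {x : V | ∀ α ∈ P, 0 < α x}))
  intro C hC
  obtain ⟨v, hv, rfl⟩ := hC
  refine ⟨RSPS RS.roots v, fun α hα => hα.1, ?_⟩
  exact (RS.CH_eq' v).symm

noncomputable instance : Finite (RS.ChamberT) := RS.chambers_finite.to_subtype

end RootSystemData
end Infra9

/-- auxiliary full statement -/
theorem stmt13_aux {V : Type*} [AddCommGroup V] [Module ℝ V] [FiniteDimensional ℝ V]
    (RS : RootSystemData V) (C₀ : Set V) (hC₀ : RS.IsChamber C₀)
    (u : RS.ChamberT → Equiv.Perm V) (huW : ∀ C, u C ∈ RS.affWeyl)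
    (hadm : RS.AdmissibleW C₀ u)
    (ψ : Module.Dual ℝ V) (ψv : V) (hψ : ∃ C : RS.ChamberT, RS.IsFundPair C.1 ψ ψv) :
    ∃ m : ℕ, ∀ w : RS.ChamberT → Equiv.Perm V, (∀ C, w C ∈ RS.affWeyl) →
      RS.AdmissibleW C₀ w → RS.RegularWAt (m : ℝ) w →
      ∀ μ ∈ RS.corootLattice,
        (∀ C : RS.ChamberT, RS.IsFundPair C.1 ψ ψv →
          RS.ordLE (RS.pos C₀) (RS.pos C.1 ∩ RS.phiZero ψv) (transl μ * u C) (w C)) →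
        ∀ C : RS.ChamberT,
          RS.ordLE (RS.pos C₀) (RS.pos C.1) (transl μ * u C) (w C) := by
  classical
  -- a bound on the u-drops
  obtain ⟨b, hb⟩ : ∃ b : ℝ, ∀ (E E' : RS.ChamberT), ∀ γ ∈ RS.roots,
      γ (piL (u E)) - γ (piL (u E')) ≤ b := by
    have : Finite {γ : Module.Dual ℝ V // γ ∈ RS.roots} := RS.finite.to_subtype
    have hfin : (Set.range (fun p : RS.ChamberT × RS.ChamberT × {γ // γ ∈ RS.roots} =>
        p.2.2.1 (piL (u p.1)) - p.2.2.1 (piL (u p.2.1)))).Finite := Set.finite_range _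
    obtain ⟨b, hb⟩ := hfin.bddAbove
    exact ⟨b, fun E E' γ hγ => hb ⟨(E, E', ⟨γ, hγ⟩), rfl⟩⟩
  obtain ⟨Nn, hNn⟩ := exists_nat_ge (max (b / 2 + 2) 2)
  set N : ℤ := (Nn : ℤ) with hNdef
  have hN2 : 2 ≤ N := by
    have h2 : (2:ℝ) ≤ (Nn:ℝ) := le_trans (le_max_right _ _) hNn
    have h3 : (2:ℕ) ≤ Nn := by exact_mod_cast h2
    rw [hNdef]
    exact_mod_cast h3
  have hbound : ∀ E E' : RS.ChamberT, ∀ γ ∈ RS.roots,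
      γ (piL (u E)) - γ (piL (u E')) ≤ 2 * ((N : ℝ) - 2) := by
    intro E E' γ hγ
    have h1 := hb E E' γ hγ
    have h2 : b / 2 + 2 ≤ (Nn:ℝ) := le_trans (le_max_left _ _) hNn
    have : ((N:ℤ):ℝ) = (Nn:ℝ) := by rw [hNdef]; push_cast; ring
    rw [this]
    linarith
  refine ⟨Nn + 2, ?_⟩
  intro w hwW hadmW hregm μ hμ hhyp C
  have hreg : RS.RegularWAt ((N : ℝ) + 2) w := by
    intro C' α hα
    have := hregm C' α hα
    have he : ((Nn + 2 : ℕ) : ℝ) = (N:ℝ) + 2 := by rw [hNdef]; push_cast; ring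
    rw [he] at this
    exact this
  have huN : ∀ C', RS.Nice (u C') := fun C' => RS.nice_affWeyl (huW C')
  have hwN : ∀ C', RS.Nice (w C') := fun C' => RS.nice_affWeyl (hwW C')
  have hμint : RS.IntVec μ := RS.intVec_lattice hμ
  -- setup the matched chamber
  obtain ⟨vC, hvC, hC⟩ := RS.isChamber_ex C.2
  obtain ⟨D₀, hD₀⟩ := hψ
  obtain ⟨v₀, hv₀, hD₀eq, hFP₀⟩ := RS.fundpair_to_FP D₀.2 hD₀
  obtain ⟨vD, hFPD, hmatch⟩ := RS.matched_exists hFP₀ hvC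
  have hvD : RS.IsRegularPt vD := hFPD.1
  set D : RS.ChamberT := ⟨RS.CH vD, RS.CH_isChamber hvD⟩ with hDdef
  have hD : D.1 = RS.CH vD := rfl
  have hFundD : RS.IsFundPair D.1 ψ ψv := RS.FP_to_fundpair hFPD
  -- hypothesis chain at D
  have hypD := hhyp D hFundD
  have hmid0 : Relation.ReflTransGen
      (RS.stepRel (RS.pos C₀) (RS.pos D.1 ∩ RS.phiZero ψv)) (transl μ * u D) (w D) :=
    RS.ordLE_to_chain hypD
  have hΦsub : RS.pos D.1 ∩ RS.phiZero ψv ⊆ RSPS RS.roots vC := by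
    rw [RS.pos_inter_phiZero hvD hD, hmatch]
    exact RS.psSub vC
  have hmid : Relation.ReflTransGen
      (RS.stepRel (RS.pos C₀) (RSPS RS.roots vC)) (transl μ * u D) (w D) :=
    Relation.ReflTransGen.lift id (fun a b hs => RS.step_mono hΦsub hs) _ _ hmid0
  -- main induction
  obtain ⟨η, hηint, htop, hbot⟩ :=
    RS.main_ind C₀ u w μ huN hwN hμint hadm hadmW N hN2 hreg hbound hvC hvD D hD
      ((RSPS RS.roots vC \ RSPS RS.roots vD).ncard) C vC hvC hC rfl Set.diff_subset
  -- middle, translated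
  have hmidT := RS.chain_transl hηint hmid
  -- total chain
  have htotal : Relation.ReflTransGen (RS.stepRel (RS.pos C₀) (RSPS RS.roots vC))
      (transl μ * u C) (w C) :=
    (hbot.trans hmidT).trans htop
  have hfinal := RS.chain_to_ordLE htotal
  rwa [← RS.pos_of_eqCH hvC hC] at hfinal


/-- Lemma 1.21: let `ū ∈ W̃^𝒞` be admissible and `ψ ∈ Ψ` (with
fundamental coweight `ψv`). Then there exists `m ∈ ℕ` such that for every
`m`-regular admissible tuple `w̄ ∈ W̃^𝒞` and every `μ ∈ Λ` with
`μ u_C ≤_{C^ψ} w_C` for all chambers `C ∋ ψ`, one has `μ u_C ≤_C w_C` for all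
chambers `C`. -/
theorem stmt13 {V : Type*} [AddCommGroup V] [Module ℝ V] [FiniteDimensional ℝ V]
    (RS : RootSystemData V) (C₀ : Set V) (hC₀ : RS.IsChamber C₀)
    (u : RS.ChamberT → Equiv.Perm V) (huW : ∀ C, u C ∈ RS.affWeyl)
    (hadm : RS.AdmissibleW C₀ u)
    (ψ : Module.Dual ℝ V) (ψv : V) (hψ : ∃ C : RS.ChamberT, RS.IsFundPair C.1 ψ ψv) :
    ∃ m : ℕ, ∀ w : RS.ChamberT → Equiv.Perm V, (∀ C, w C ∈ RS.affWeyl) →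
      RS.AdmissibleW C₀ w → RS.RegularWAt (m : ℝ) w →
      ∀ μ ∈ RS.corootLattice,
        (∀ C : RS.ChamberT, RS.IsFundPair C.1 ψ ψv →
          RS.ordLE (RS.pos C₀) (RS.pos C.1 ∩ RS.phiZero ψv) (transl μ * u C) (w C)) →
        ∀ C : RS.ChamberT,
          RS.ordLE (RS.pos C₀) (RS.pos C.1) (transl μ * u C) (w C) := by
  exact stmt13_aux RS C₀ hC₀ u huW hadm ψ ψv hψ
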